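/- arXiv:1711.02432 — 8 statements merged into one kernel-verified Lean document; each statement's English description precedes it below -/
import Mathlib

section
/- Let K be a field of characteristic 0 and L = K(∛b) for some b ∈ K that is not a cube in K. Then every element ξ ∈ L can be written in the form ξ = (α + β∛b)/(γ + δ∛b) with α, β, γ, δ ∈ K and (γ, δ) ≠ (0,0). -/
/-- Every element of `L = K(∛b)` can be written as `(α + β∛b)/(γ + δ∛b)`
with `α, β, γ, δ ∈ K` and `(γ, δ) ≠ (0,0)`. -/
theorem stmt_0 (K L : Type*) [Field K] [CharZero K] [Field L] [Algebra K L]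
    (b : K) (hb : ¬ ∃ c : K, c ^ 3 = b)
    (r : L) (hr : r ^ 3 = algebraMap K L b)
    (hgen : Algebra.adjoin K {r} = ⊤) (ξ : L) :
    ∃ α β γ δ : K, (γ, δ) ≠ (0, 0) ∧
      ξ = (algebraMap K L α + algebraMap K L β * r) /
          (algebraMap K L γ + algebraMap K L δ * r) := by
  have hinj : Function.Injective (algebraMap K L) := (algebraMap K L).injective
  -- ξ is a polynomial in r
  have hξ : ξ ∈ Algebra.adjoin K ({r} : Set L) := hgen ▸ Algebra.mem_top
  rw [Algebra.adjoin_singleton_eq_range_aeval] at hξ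
  obtain ⟨p, hp⟩ := hξ
  set f : Polynomial K := Polynomial.X ^ 3 - Polynomial.C b with hf
  have hfm : f.Monic := Polynomial.monic_X_pow_sub_C b (by norm_num)
  have hfr : Polynomial.aeval r f = 0 := by
    simp [hf, hr]
  set q := p %ₘ f with hq
  have hp' : Polynomial.aeval r p = ξ := hp
  have hval : Polynomial.aeval r q = ξ := by
    rw [← hp']
    conv_rhs => rw [← Polynomial.modByMonic_add_div p f]
    rw [map_add, map_mul, hfr, zero_mul, add_zero]
  have hdeg : q.natDegree < 3 := by
    rcases eq_or_ne q 0 with h0 | h0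
    · simp [h0]
    · have hd : q.degree < f.degree := Polynomial.degree_modByMonic_lt p hfm
      have : f.degree = 3 := by
        rw [hf]; exact Polynomial.degree_X_pow_sub_C (by norm_num) b
      rw [Polynomial.natDegree_lt_iff_degree_lt h0]
      rw [this] at hd
      exact_mod_cast hd
  have hξ3 : ξ = algebraMap K L (q.coeff 0) + algebraMap K L (q.coeff 1) * r
      + algebraMap K L (q.coeff 2) * r ^ 2 := by
    rw [← hval, Polynomial.aeval_eq_sum_range' hdeg]
    simp [Finset.sum_range_succ, Algebra.smul_def, mul_comm]
  set A := q.coeff 0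
  set B := q.coeff 1
  set Cc := q.coeff 2
  rcases eq_or_ne Cc 0 with hC | hC
  · refine ⟨A, B, 1, 0, by simp, ?_⟩
    rw [hξ3, hC]
    simp
  · refine ⟨A * B - b * Cc ^ 2, B ^ 2 - A * Cc, B, -Cc, by simp [hC], ?_⟩
    have hden : algebraMap K L B + algebraMap K L (-Cc) * r ≠ 0 := by
      intro h
      apply hb
      refine ⟨B / Cc, ?_⟩
      have hr' : r = algebraMap K L (B / Cc) := by
        have hCc : algebraMap K L Cc ≠ 0 := fun hz => hC (hinj (by simpa using hz))
        rw [map_div₀, eq_div_iff hCc]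
        rw [map_neg] at h
        linear_combination -h
      apply hinj
      rw [map_pow, ← hr', hr]
    rw [eq_div_iff hden, hξ3]
    simp only [map_sub, map_mul, map_neg, map_pow]
    linear_combination (-(algebraMap K L Cc)^2) * hr
end

section
/- Let K be a field of characteristic 0 and b ∈ K not a cube, L = K(∛b). For a ∈ K×, the element a is a norm from L to K if and only if the projective surface V_{a,b} : x₁³ + a·x₂³ + b·x₃³ + a·b·x₄³ = 0 in P³ has a K-rational point. -/
open Polynomial

/-- For `a ∈ K×` and `L = K(∛b)`, `a` is a norm from `L` to `K` iff the diagonal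
cubic surface `V_{a,b} : x₁³ + a x₂³ + b x₃³ + a b x₄³ = 0` has a `K`-rational point. -/
theorem stmt_1 (K L : Type*) [Field K] [CharZero K] [Field L] [Algebra K L]
    [FiniteDimensional K L]
    (a b : K) (ha : a ≠ 0) (hb0 : b ≠ 0) (hb : ¬ ∃ c : K, c ^ 3 = b)
    (r : L) (hr : r ^ 3 = algebraMap K L b)
    (hgen : Algebra.adjoin K {r} = ⊤) :
    (∃ ξ : L, Algebra.norm K ξ = a) ↔
      ∃ x₁ x₂ x₃ x₄ : K, ¬ (x₁ = 0 ∧ x₂ = 0 ∧ x₃ = 0 ∧ x₄ = 0) ∧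
        x₁ ^ 3 + a * x₂ ^ 3 + b * x₃ ^ 3 + a * b * x₄ ^ 3 = 0 := by
  classical
  -- Setup: minimal polynomial, power basis, norm formula
  have hirr : Irreducible (X ^ 3 - C b) :=
    X_pow_sub_C_irreducible_of_prime (by norm_num) (fun c hc => hb ⟨c, hc⟩)
  have hmonic : (X ^ 3 - C b).Monic := by
    apply Polynomial.monic_X_pow_sub_C _ (by norm_num)
  have haev : Polynomial.aeval r (X ^ 3 - C b) = 0 := by simp [hr]
  have hint : IsIntegral K r := ⟨X ^ 3 - C b, hmonic, by simpa using haev⟩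
  have hmin : minpoly K r = X ^ 3 - C b :=
    (minpoly.eq_of_irreducible_of_monic hirr haev hmonic).symm
  have hdeg : (minpoly K r).natDegree = 3 := by rw [hmin]; compute_degree!
  let pb : PowerBasis K L := (Algebra.adjoin.powerBasis hint).map <|
    (Subalgebra.equivOfEq _ ⊤ hgen).trans Subalgebra.topEquiv
  have hpbgen : pb.gen = r := by simp [pb]
  have hpbdim : pb.dim = 3 := by simp [pb, hdeg]
  have hfr : Module.finrank K L = 3 := by rw [pb.finrank, hpbdim]
  let B : Module.Basis (Fin 3) K L := pb.basis.reindex (finCongr hpbdim)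
  have hB : ∀ i : Fin 3, B i = r ^ (i : ℕ) := by
    intro i
    simp [B, Module.Basis.reindex_apply, PowerBasis.coe_basis, hpbgen]
  have hrepr : ∀ (c₀ c₁ c₂ : K) (i : Fin 3),
      B.repr (algebraMap K L c₀ + algebraMap K L c₁ * r + algebraMap K L c₂ * r ^ 2) i
        = ![c₀, c₁, c₂] i := by
    intro c₀ c₁ c₂ i
    have h : algebraMap K L c₀ + algebraMap K L c₁ * r + algebraMap K L c₂ * r ^ 2
        = c₀ • B 0 + c₁ • B 1 + c₂ • B 2 := by
      simp [hB, Algebra.smul_def]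
    rw [h]
    simp only [map_add, map_smul, Module.Basis.repr_self, Finsupp.coe_add, Finsupp.coe_smul,
      Pi.add_apply, Pi.smul_apply, Finsupp.single_apply, smul_eq_mul]
    fin_cases i <;> simp
  have hnorm : ∀ u v w : K,
      Algebra.norm K (algebraMap K L u + algebraMap K L v * r + algebraMap K L w * r ^ 2)
        = u ^ 3 + b * v ^ 3 + b ^ 2 * w ^ 3 - 3 * b * u * v * w := by
    intro u v w
    set ξ := algebraMap K L u + algebraMap K L v * r + algebraMap K L w * r ^ 2 with hξ
    have e0 : ξ * B 0 = algebraMap K L u + algebraMap K L v * r + algebraMap K L w * r ^ 2 := by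
      rw [hB]; simp [hξ]
    have e1 : ξ * B 1
        = algebraMap K L (b * w) + algebraMap K L u * r + algebraMap K L v * r ^ 2 := by
      rw [hB]; simp only [hξ, map_mul, ← hr, Fin.val_one, Fin.val_two]; ring
    have e2 : ξ * B 2
        = algebraMap K L (b * v) + algebraMap K L (b * w) * r + algebraMap K L u * r ^ 2 := by
      rw [hB]; simp only [hξ, map_mul, ← hr, Fin.val_one, Fin.val_two]; ring
    rw [Algebra.norm_eq_matrix_det B, Matrix.det_fin_three]
    simp only [Algebra.leftMulMatrix_eq_repr_mul, e0, e1, e2, hrepr]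
    simp only [Matrix.cons_val_zero, Matrix.cons_val_one, Matrix.head_cons,
      Matrix.cons_val_two, Matrix.tail_cons]
    ring
  have hnorm2 : ∀ u v : K,
      Algebra.norm K (algebraMap K L u + algebraMap K L v * r) = u ^ 3 + b * v ^ 3 := by
    intro u v
    have := hnorm u v 0
    simpa using this
  constructor
  · -- norm ⇒ rational point
    rintro ⟨θ, hθ⟩
    set u := B.repr θ 0 with hu
    set v := B.repr θ 1 with hv
    set w := B.repr θ 2 with hw
    have hθexp : θ = algebraMap K L u + algebraMap K L v * r + algebraMap K L w * r ^ 2 := by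
      have := B.sum_repr θ
      rw [Fin.sum_univ_three] at this
      rw [← this]
      simp [hB, Algebra.smul_def, hu, hv, hw]
    have hform : u ^ 3 + b * v ^ 3 + b ^ 2 * w ^ 3 - 3 * b * u * v * w = a := by
      rw [← hθ, hθexp, hnorm]
    by_cases hvw : v = 0 ∧ w = 0
    · obtain ⟨hv0, hw0⟩ := hvw
      refine ⟨u, -1, 0, 0, by simp, ?_⟩
      rw [hv0, hw0] at hform
      linear_combination hform
    · refine ⟨u * v - b * w ^ 2, -v, v ^ 2 - u * w, w, ?_, ?_⟩
      · rintro ⟨-, h2, -, h4⟩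
        exact hvw ⟨by simpa using h2, h4⟩
      · linear_combination (v ^ 3 - b * w ^ 3) * hform
  · -- rational point ⇒ norm
    rintro ⟨x₁, x₂, x₃, x₄, hnt, heq⟩
    set ξ := algebraMap K L x₁ + algebraMap K L x₃ * r with hξdef
    set η := algebraMap K L x₂ + algebraMap K L x₄ * r with hηdef
    by_cases hη : η = 0
    · exfalso
      have h2 : x₂ = 0 := by
        have h := hrepr x₂ x₄ 0 0
        simp only [map_zero, zero_mul, add_zero] at h
        rw [← hηdef, hη] at h
        simpa using h.symm
      have h4 : x₄ = 0 := by
        have h := hrepr x₂ x₄ 0 1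
        simp only [map_zero, zero_mul, add_zero] at h
        rw [← hηdef, hη] at h
        simpa using h.symm
      rw [h2, h4] at heq
      have heq' : x₁ ^ 3 + b * x₃ ^ 3 = 0 := by linear_combination heq
      by_cases h3 : x₃ = 0
      · have h1 : x₁ = 0 := by
          have hx : x₁ ^ 3 = 0 := by rw [h3] at heq'; linear_combination heq'
          exact pow_eq_zero_iff (by norm_num) |>.mp hx
        exact hnt ⟨h1, h2, h3, h4⟩
      · apply hb
        refine ⟨-x₁ / x₃, ?_⟩
        field_simp
        linear_combination -heq'
    · have hNη : Algebra.norm K η ≠ 0 := by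
        intro h0
        exact hη ((Algebra.norm_eq_zero_iff).mp h0)
      refine ⟨-ξ * η⁻¹, ?_⟩
      have hmul : (-ξ * η⁻¹) * η = -ξ := by
        field_simp
      have hneg : Algebra.norm K (-ξ) = a * Algebra.norm K η := by
        have : (-ξ : L) = algebraMap K L (-1) * ξ := by simp
        rw [this, map_mul, Algebra.norm_algebraMap, hfr, hηdef, hξdef, hnorm2, hnorm2]
        linear_combination -heq
      have key : Algebra.norm K (-ξ * η⁻¹) * Algebra.norm K η = a * Algebra.norm K η := by
        rw [← map_mul, hmul, hneg]
      exact mul_right_cancel₀ hNη key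
end

section
/- Let K be a field of characteristic 0 and a, b ∈ K× with neither a nor b a cube in K. Then a is a norm for the extension K(∛b)/K if and only if b is a norm for the extension K(∛a)/K. -/
open Polynomial

lemma cubic_package {K : Type*} [Field K] {Lf : Type*} [Field Lf] [Algebra K Lf]
    (c : K) (hc : ∀ t : K, t ^ 3 ≠ c) (r : Lf) (hr : r ^ 3 = algebraMap K Lf c)
    (hgen : Algebra.adjoin K {r} = ⊤) :
    Module.finrank K Lf = 3 ∧
    (∀ u v w : K, Algebra.norm K
        (algebraMap K Lf u + algebraMap K Lf v * r + algebraMap K Lf w * r ^ 2)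
        = u ^ 3 + c * v ^ 3 + c ^ 2 * w ^ 3 - 3 * c * (u * v * w)) ∧
    (∀ ξ : Lf, ∃ u v w : K,
        ξ = algebraMap K Lf u + algebraMap K Lf v * r + algebraMap K Lf w * r ^ 2) := by
  have hmonic : (X ^ 3 - C c : K[X]).Monic := monic_X_pow_sub_C c (by norm_num)
  have haev : (Polynomial.aeval r) (X ^ 3 - C c : K[X]) = 0 := by
    simp [hr]
  have hint : IsIntegral K r := ⟨X ^ 3 - C c, hmonic, haev⟩
  have hirr : Irreducible (X ^ 3 - C c : K[X]) :=
    X_pow_sub_C_irreducible_of_prime Nat.prime_three hc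
  have hmin : minpoly K r = X ^ 3 - C c :=
    (minpoly.eq_of_irreducible_of_monic hirr haev hmonic).symm
  have hdeg : (minpoly K r).natDegree = 3 := by
    rw [hmin]; exact natDegree_X_pow_sub_C
  let e : (Algebra.adjoin K ({r} : Set Lf)) ≃ₐ[K] Lf :=
    (Subalgebra.equivOfEq _ _ hgen).trans Subalgebra.topEquiv
  let pb : PowerBasis K Lf := (Algebra.adjoin.powerBasis hint).map e
  have hpbgen : pb.gen = r := rfl
  have hpbdim : pb.dim = 3 := hdeg
  let B : Module.Basis (Fin 3) K Lf := pb.basis.reindex (finCongr hpbdim)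
  have hB : ∀ i : Fin 3, B i = r ^ (i : ℕ) := by
    intro i
    simp [B, Module.Basis.reindex_apply, pb.basis_eq_pow, hpbgen]
  have hB0 : B 0 = 1 := by rw [hB 0]; norm_num
  have hB1 : B 1 = r := by rw [hB 1]; norm_num
  have hB2 : B 2 = r ^ 2 := by rw [hB 2]; norm_num
  have hfin : Module.finrank K Lf = 3 := by rw [pb.finrank, hpbdim]
  have hrepr : ∀ p q s : K,
      ⇑(B.repr (algebraMap K Lf p + algebraMap K Lf q * r + algebraMap K Lf s * r ^ 2))
        = ![p, q, s] := by
    intro p q s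
    have hsum : algebraMap K Lf p + algebraMap K Lf q * r + algebraMap K Lf s * r ^ 2
        = ∑ i : Fin 3, ![p, q, s] i • B i := by
      rw [Fin.sum_univ_three]
      simp only [hB0, hB1, hB2, Matrix.cons_val_zero, Matrix.cons_val_one, Matrix.head_cons,
        Matrix.cons_val_two, Matrix.tail_cons, Algebra.smul_def]
      ring
    rw [hsum, B.repr_sum_self]
  refine ⟨hfin, ?_, ?_⟩
  · intro u v w
    set ξ := algebraMap K Lf u + algebraMap K Lf v * r + algebraMap K Lf w * r ^ 2 with hξdef
    have h0 : ξ * B 0 = algebraMap K Lf u + algebraMap K Lf v * r + algebraMap K Lf w * r ^ 2 := by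
      rw [hB0, mul_one]
    have h1 : ξ * B 1 = algebraMap K Lf (c * w) + algebraMap K Lf u * r
        + algebraMap K Lf v * r ^ 2 := by
      rw [hB1, map_mul, hξdef]
      linear_combination (algebraMap K Lf w) * hr
    have h2 : ξ * B 2 = algebraMap K Lf (c * v) + algebraMap K Lf (c * w) * r
        + algebraMap K Lf u * r ^ 2 := by
      rw [hB2, map_mul, map_mul, hξdef]
      linear_combination (algebraMap K Lf v + algebraMap K Lf w * r) * hr
    have hmat : Algebra.leftMulMatrix B ξ = !![u, c*w, c*v; v, u, c*w; w, v, u] := by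
      ext i j
      rw [Algebra.leftMulMatrix_eq_repr_mul]
      fin_cases j <;>
        simp only [Fin.zero_eta, Fin.mk_one, Fin.reduceFinMk] <;>
        [rw [h0, hrepr]; rw [h1, hrepr]; rw [h2, hrepr]] <;>
        fin_cases i <;> simp
    rw [Algebra.norm_eq_matrix_det B, hmat]
    simp [Matrix.det_fin_three]
    ring
  · intro ξ
    refine ⟨B.repr ξ 0, B.repr ξ 1, B.repr ξ 2, ?_⟩
    have hs := B.sum_repr ξ
    rw [Fin.sum_univ_three] at hs
    simp only [hB0, hB1, hB2, Algebra.smul_def] at hs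
    exact hs.symm.trans (by ring)

lemma cubic_norm_swap (K : Type*) [Field K] [CharZero K]
    (a b : K) (ha0 : a ≠ 0) (hb0 : b ≠ 0)
    (ha : ¬ ∃ c : K, c ^ 3 = a) (hb : ¬ ∃ c : K, c ^ 3 = b)
    (La Lb : Type*) [Field La] [Algebra K La] [FiniteDimensional K La]
    [Field Lb] [Algebra K Lb] [FiniteDimensional K Lb]
    (ra : La) (hra : ra ^ 3 = algebraMap K La a)
    (hgena : Algebra.adjoin K {ra} = ⊤)
    (rb : Lb) (hrb : rb ^ 3 = algebraMap K Lb b)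
    (hgenb : Algebra.adjoin K {rb} = ⊤) :
    (∃ ξ : Lb, Algebra.norm K ξ = a) → (∃ ξ : La, Algebra.norm K ξ = b) := by
  obtain ⟨hfb, hnormb, hcoordb⟩ :=
    cubic_package b (fun t ht => hb ⟨t, ht⟩) rb hrb hgenb
  obtain ⟨hfa, hnorma, hcoorda⟩ :=
    cubic_package a (fun t ht => ha ⟨t, ht⟩) ra hra hgena
  rintro ⟨ξ, hξ⟩
  obtain ⟨x, y, z, rfl⟩ := hcoordb ξ
  rw [hnormb] at hξ
  -- hξ : x^3 + b*y^3 + b^2*z^3 - 3*b*(x*y*z) = a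
  set P : K := y * (y ^ 2 - x * z) with hPdef
  set Q : K := z * (b * z ^ 2 - x * y) with hQdef
  have hPQ : ¬ (P = 0 ∧ Q = 0) := by
    rintro ⟨hP, hQ⟩
    by_cases hz : z = 0
    · have hy : y = 0 := by
        rw [hPdef, hz] at hP
        have : y ^ 3 = 0 := by linear_combination hP
        exact pow_eq_zero_iff (by norm_num) |>.mp this
      exact ha ⟨x, by rw [hz, hy] at hξ; linear_combination hξ⟩
    · have hyz : b * z ^ 2 = x * y := by
        rcases mul_eq_zero.mp hQ with h | h
        · exact absurd h hz
        · linear_combination h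
      by_cases hy : y = 0
      · apply hb0
        have : b * z ^ 2 = 0 := by rw [hyz, hy, mul_zero]
        rcases mul_eq_zero.mp this with h | h
        · exact h
        · exact absurd (pow_eq_zero_iff (by norm_num) |>.mp h) hz
      · have hxz : y ^ 2 = x * z := by
          rcases mul_eq_zero.mp hP with h | h
          · exact absurd h hy
          · linear_combination h
        refine absurd ⟨y / z, ?_⟩ hb
        field_simp
        linear_combination y * hxz - z * hyz
  by_cases hD : P ^ 2 + P * Q + Q ^ 2 = 0
  · -- the field contains a primitive cube root of unity m = P/Q
    have hQ0 : Q ≠ 0 := by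
      intro h0
      apply hPQ
      refine ⟨?_, h0⟩
      have : P ^ 2 = 0 := by rw [h0] at hD; linear_combination hD
      exact pow_eq_zero_iff (by norm_num) |>.mp this
    set m : K := P / Q with hmdef
    have hPm : P = m * Q := by rw [hmdef]; field_simp
    have hm : m ^ 2 + m + 1 = 0 := by
      have h1 : (m ^ 2 + m + 1) * Q ^ 2 = P ^ 2 + P * Q + Q ^ 2 := by
        rw [hPm]; ring
      have h2 : (m ^ 2 + m + 1) * Q ^ 2 = 0 := by rw [h1, hD]
      rcases mul_eq_zero.mp h2 with h | h
      · exact h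
      · exact absurd (pow_eq_zero_iff (by norm_num) |>.mp h) hQ0
    set C0 : K := z * (x ^ 2 - b * y * z) + (1 + m) * (x * (y ^ 2 - x * z)) with hC0
    set C1 : K := -((1 + m) * (y ^ 2 - x * z)) with hC1
    set C2 : K := -z with hC2
    set d : K := -((1 + m) * P) - m * Q with hd
    have hdQ : d = (1 - m) * Q := by
      rw [hd, hPm]
      linear_combination (-Q) * hm
    have hd0 : d ≠ 0 := by
      rw [hdQ]
      refine mul_ne_zero (fun h => ?_) hQ0
      have hm1 : m = 1 := by linear_combination -h
      rw [hm1] at hm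
      norm_num at hm
    have hid : C0 ^ 3 + a * C1 ^ 3 + a ^ 2 * C2 ^ 3 - 3 * a * (C0 * C1 * C2) = b * d ^ 3 := by
      rw [← hξ, hC0, hC1, hC2, hd, hPdef, hQdef]
      linear_combination (b*x^3*y^3*z^3 + 2*b*x^3*y^3*z^3*m - 3*b*x^4*y*z^4*m + b^2*y^6*z^3
        + 2*b^2*y^6*z^3*m - 3*b^2*x*y^4*z^4 - 9*b^2*x*y^4*z^4*m + 9*b^2*x^2*y^2*z^5*m
        - b^2*x^3*z^6 + b^2*x^3*z^6*m + 3*b^3*y^3*z^6*m + 3*b^3*x*y*z^7 - 6*b^3*x*y*z^7*m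
        - b^4*z^9 + b^4*z^9*m) * hm
    have hu : C0 = C0 / d * d := (div_mul_cancel₀ C0 hd0).symm
    have hv : C1 = C1 / d * d := (div_mul_cancel₀ C1 hd0).symm
    have hw : C2 = C2 / d * d := (div_mul_cancel₀ C2 hd0).symm
    rw [hu, hv, hw] at hid
    refine ⟨algebraMap K La (C0 / d) + algebraMap K La (C1 / d) * ra
      + algebraMap K La (C2 / d) * ra ^ 2, ?_⟩
    rw [hnorma]
    apply mul_right_cancel₀ (pow_ne_zero 3 hd0)
    linear_combination hid
  · -- generic case : rational solution of norm b^2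
    set U0 : K := x^2*y^4 + b*y^5*z - 5*b*x*y^3*z^2 + 2*b*x^2*y*z^3 + 2*b^2*y^2*z^4
      - b^2*x*z^5 with hU0
    set U1 : K := -2*x*y^4 + 3*x^2*y^2*z + 2*b*y^3*z^2 - 4*b*x*y*z^3 + b^2*z^5 with hU1
    set U2 : K := y^4 - 3*x*y^2*z + 2*b*y*z^3 with hU2
    set D : K := P ^ 2 + P * Q + Q ^ 2 with hDdef
    have hid : U0 ^ 3 + a * U1 ^ 3 + a ^ 2 * U2 ^ 3 - 3 * a * (U0 * U1 * U2)
        = b ^ 2 * D ^ 3 := by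
      rw [← hξ, hU0, hU1, hU2, hDdef, hPdef, hQdef]
      ring
    have hD0 : D ≠ 0 := hD
    have hu : U0 = U0 / D * D := (div_mul_cancel₀ U0 hD0).symm
    have hv : U1 = U1 / D * D := (div_mul_cancel₀ U1 hD0).symm
    have hw : U2 = U2 / D * D := (div_mul_cancel₀ U2 hD0).symm
    rw [hu, hv, hw] at hid
    set η : La := algebraMap K La (U0 / D) + algebraMap K La (U1 / D) * ra
      + algebraMap K La (U2 / D) * ra ^ 2 with hη
    have hNη : Algebra.norm K η = b ^ 2 := by
      rw [hη, hnorma]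
      apply mul_right_cancel₀ (pow_ne_zero 3 hD0)
      linear_combination hid
    have hη0 : η ≠ 0 := by
      intro h0
      rw [h0, Algebra.norm_zero] at hNη
      exact pow_ne_zero 2 hb0 hNη.symm
    refine ⟨algebraMap K La b * η⁻¹, ?_⟩
    have hmul : Algebra.norm K (algebraMap K La b * η⁻¹) * Algebra.norm K η = b ^ 3 := by
      rw [← map_mul]
      have : algebraMap K La b * η⁻¹ * η = algebraMap K La b := by
        field_simp
      rw [this, Algebra.norm_algebraMap, hfa]
    rw [hNη] at hmul
    have hb2 : (b : K) ^ 2 ≠ 0 := pow_ne_zero 2 hb0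
    exact mul_right_cancel₀ hb2 (by rw [hmul]; ring)

/-- For non-cubes `a, b ∈ K×`, `a` is a norm for `K(∛b)/K` iff `b` is a norm
for `K(∛a)/K`. -/
theorem stmt_2 (K : Type*) [Field K] [CharZero K]
    (a b : K) (ha0 : a ≠ 0) (hb0 : b ≠ 0)
    (ha : ¬ ∃ c : K, c ^ 3 = a) (hb : ¬ ∃ c : K, c ^ 3 = b)
    (La Lb : Type*) [Field La] [Algebra K La] [FiniteDimensional K La]
    [Field Lb] [Algebra K Lb] [FiniteDimensional K Lb]
    (ra : La) (hra : ra ^ 3 = algebraMap K La a)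
    (hgena : Algebra.adjoin K {ra} = ⊤)
    (rb : Lb) (hrb : rb ^ 3 = algebraMap K Lb b)
    (hgenb : Algebra.adjoin K {rb} = ⊤) :
    (∃ ξ : Lb, Algebra.norm K ξ = a) ↔ (∃ ξ : La, Algebra.norm K ξ = b) := by
  constructor
  · exact cubic_norm_swap K a b ha0 hb0 ha hb La Lb ra hra hgena rb hrb hgenb
  · exact cubic_norm_swap K b a hb0 ha0 hb ha Lb La rb hrb hgenb ra hra hgena
end

section
/- Let K be a field with a primitive p-th root of unity ζ_p (p prime), let b ∈ K× be a non-p-th-power, L = K(b^{1/p}) with Galois group generated by γ, and let A(χ,b) be the cyclic algebra ⊕_{i=0}^{p−1} L·vⁱ with v^p = b and v·x = γ(x)·v for x ∈ L. If b is a norm from L to K, then A(χ,b) is isomorphic to the matrix algebra Mat_p(K). -/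
open Polynomial Module IntermediateField

/-- If `b` is a norm from the Kummer extension `L = K(b^{1/p})` to `K`, then the
cyclic algebra `A(χ,b)` (presented by `L`, an element `v` with `v^p = b` and
`v·x = γ(x)·v`) is isomorphic to the matrix algebra `Mat_p(K)`. -/
theorem stmt_5 (p : ℕ) (hp : p.Prime) (K L : Type*) [Field K] [Field L] [Algebra K L]
    [FiniteDimensional K L]
    (ζ : K) (hζ : IsPrimitiveRoot ζ p)
    (b : K) (hb0 : b ≠ 0) (hb : ¬ ∃ c : K, c ^ p = b)
    (r : L) (hr : r ^ p = algebraMap K L b)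
    (hgen : Algebra.adjoin K {r} = ⊤)
    (γ : L ≃ₐ[K] L) (hγ : γ r = algebraMap K L ζ * r)
    (A : Type*) [Ring A] [Algebra K A]
    (f : L →ₐ[K] A) (v : A)
    (hv : v ^ p = algebraMap K A b)
    (hrel : ∀ x : L, v * f x = f (γ x) * v)
    (hgenA : Algebra.adjoin K (Set.range ⇑f ∪ {v}) = ⊤)
    (hdimA : Module.finrank K A = p ^ 2)
    (hnorm : ∃ ξ : L, Algebra.norm K ξ = b) :
    Nonempty (A ≃ₐ[K] Matrix (Fin p) (Fin p) K) := by
  classical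
  obtain ⟨ξ, hξ⟩ := hnorm
  have hp0 : 0 < p := hp.pos
  have hrint : IsIntegral K r := IsIntegral.of_finite K r
  have hr0 : r ≠ 0 := by
    intro h
    apply hb0
    have h1 : algebraMap K L b = 0 := by rw [← hr, h, zero_pow hp.ne_zero]
    exact (algebraMap K L).injective (h1.trans (map_zero (algebraMap K L)).symm)
  -- the minimal polynomial of r and the dimension of L
  have hmin : minpoly K r = X ^ p - C b :=
    (minpoly.eq_of_irreducible_of_monic
      (X_pow_sub_C_irreducible_of_prime hp (fun c hc => hb ⟨c, hc⟩))
      (by rw [map_sub, map_pow, aeval_X, aeval_C, hr, sub_self])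
      (monic_X_pow_sub_C b hp.ne_zero)).symm
  have htop : K⟮r⟯ = ⊤ := by
    apply IntermediateField.toSubalgebra_injective
    rw [adjoin_simple_toSubalgebra_of_isAlgebraic hrint.isAlgebraic, hgen]
    rfl
  have hdimL : finrank K L = p := by
    have h3 := IntermediateField.adjoin.finrank hrint
    rw [hmin, natDegree_X_pow_sub_C] at h3
    have h4 := IntermediateField.finrank_top' (F := K) (E := L)
    rw [← htop] at h4
    exact h4.symm.trans h3
  -- action of powers of γ on r
  have hγj : ∀ j : ℕ, (γ ^ j) r = algebraMap K L (ζ ^ j) * r := by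
    intro j
    induction j with
    | zero => simp
    | succ n ih =>
      rw [pow_succ, AlgEquiv.mul_apply, hγ, map_mul, AlgEquiv.commutes, ih, ← mul_assoc,
        ← map_mul, ← pow_succ']
  have hr_inj : ∀ i j : Fin p, (γ ^ (i : ℕ)) r = (γ ^ (j : ℕ)) r → i = j := by
    intro i j hij
    rw [hγj, hγj] at hij
    exact Fin.ext (hζ.pow_inj i.isLt j.isLt
      ((algebraMap K L).injective (mul_right_cancel₀ hr0 hij)))
  -- every K-automorphism of L is a power of γ
  have hζL : IsPrimitiveRoot (algebraMap K L ζ) p :=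
    hζ.map_of_injective (algebraMap K L).injective
  haveI : NeZero p := ⟨hp.ne_zero⟩
  have hsurj_pow : ∀ σ : L ≃ₐ[K] L, ∃ j : Fin p, σ = γ ^ (j : ℕ) := by
    intro σ
    have h1 : (σ r) ^ p = r ^ p := by
      rw [← map_pow, hr, AlgEquiv.commutes]
    have h2 : (σ r * r⁻¹) ^ p = 1 := by
      rw [mul_pow, h1, inv_pow, mul_inv_cancel₀ (pow_ne_zero _ hr0)]
    obtain ⟨j, hj, hjeq⟩ := hζL.eq_pow_of_pow_eq_one h2
    refine ⟨⟨j, hj⟩, ?_⟩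
    have hσr : σ r = (γ ^ j) r := by
      rw [hγj, map_pow, hjeq, inv_mul_cancel_right₀ hr0]
    have hle : Algebra.adjoin K {r} ≤
        AlgHom.equalizer (σ : L →ₐ[K] L) ((γ ^ j : L ≃ₐ[K] L) : L →ₐ[K] L) := by
      apply Algebra.adjoin_le
      rintro x rfl
      simpa using hσr
    ext x
    have hx : x ∈ AlgHom.equalizer (σ : L →ₐ[K] L) ((γ ^ j : L ≃ₐ[K] L) : L →ₐ[K] L) := by
      apply hle
      rw [hgen]; trivial
    simpa using hx
  let e : Fin p → (L ≃ₐ[K] L) := fun j => γ ^ (j : ℕ)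
  have hebij : Function.Bijective e :=
    ⟨fun i j h => hr_inj i j (by rw [show (γ ^ (i:ℕ)) = e i from rfl, h]),
     fun σ => (hsurj_pow σ).imp (fun j h => h.symm)⟩
  have hcardAut : Fintype.card (L ≃ₐ[K] L) = p := by
    rw [← Fintype.card_fin p]
    exact (Fintype.card_of_bijective hebij).symm
  haveI : IsGalois K L := IsGalois.of_card_aut_eq_finrank K L (by rw [Nat.card_eq_fintype_card, hcardAut, hdimL])
  have hγp : γ ^ p = 1 := by rw [← hcardAut]; exact pow_card_eq_one
  have hξ0 : ξ ≠ 0 := by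
    intro h
    apply hb0
    rw [← hξ, h]
    exact Algebra.norm_zero
  have hprod : ∏ t ∈ Finset.range p, (γ ^ t) ξ = algebraMap K L b := by
    calc ∏ t ∈ Finset.range p, (γ ^ t) ξ
        = ∏ j : Fin p, (γ ^ (j : ℕ)) ξ := (Fin.prod_univ_eq_prod_range _ p).symm
      _ = ∏ σ : L ≃ₐ[K] L, σ ξ := Fintype.prod_bijective e hebij _ _ (fun j => rfl)
      _ = algebraMap K L b := by rw [← Algebra.norm_eq_prod_automorphisms, hξ]
  -- the model algebra: endomorphisms of L
  set M : L →ₐ[K] Module.End K L := Algebra.lmul K L with hMdef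
  have hM : ∀ (x z : L), M x z = x * z := fun x z => rfl
  set Γ : Module.End K L := γ.toLinearMap with hΓdef
  have hΓ : ∀ (j : ℕ) (z : L), (Γ ^ j) z = (γ ^ j) z := by
    intro j
    induction j with
    | zero => intro z; simp
    | succ n ih =>
      intro z
      rw [pow_succ, Module.End.mul_apply, show Γ z = γ z from rfl, ih, ← AlgEquiv.mul_apply,
        ← pow_succ]
  set V : Module.End K L := M ξ * Γ with hVdef
  have hΓMpow : ∀ (j : ℕ) (y : L), Γ ^ j * M y = M ((γ ^ j) y) * Γ ^ j := by
    intro j y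
    apply LinearMap.ext
    intro z
    simp only [Module.End.mul_apply]
    show (Γ ^ j) (y * z) = (γ ^ j) y * (Γ ^ j) z
    rw [hΓ, hΓ, map_mul]
  have hVM : ∀ y : L, V * M y = M (γ y) * V := by
    intro y
    apply LinearMap.ext
    intro z
    simp only [hVdef, Module.End.mul_apply]
    show ξ * γ (y * z) = γ y * (ξ * γ z)
    rw [map_mul]
    ring
  have hVMpow : ∀ (j : ℕ) (y : L), V ^ j * M y = M ((γ ^ j) y) * V ^ j := by
    intro j
    induction j with
    | zero => intro y; simp
    | succ n ih =>
      intro y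
      calc V ^ (n + 1) * M y = V ^ n * (V * M y) := by rw [pow_succ, mul_assoc]
        _ = V ^ n * (M (γ y) * V) := by rw [hVM]
        _ = (V ^ n * M (γ y)) * V := by rw [mul_assoc]
        _ = M ((γ ^ n) (γ y)) * V ^ n * V := by rw [ih]
        _ = M ((γ ^ (n + 1)) y) * V ^ (n + 1) := by
            rw [mul_assoc, ← pow_succ, ← AlgEquiv.mul_apply, ← pow_succ]
  have hcprod : ∀ j : ℕ, V ^ j = M (∏ t ∈ Finset.range j, (γ ^ t) ξ) * Γ ^ j := by
    intro j
    induction j with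
    | zero => simp
    | succ n ih =>
      calc V ^ (n + 1) = (M (∏ t ∈ Finset.range n, (γ ^ t) ξ) * Γ ^ n) * (M ξ * Γ) := by
            rw [pow_succ, ih, hVdef]
        _ = M (∏ t ∈ Finset.range n, (γ ^ t) ξ) * ((Γ ^ n * M ξ) * Γ) := by
            rw [mul_assoc, mul_assoc]
        _ = M (∏ t ∈ Finset.range n, (γ ^ t) ξ) * ((M ((γ ^ n) ξ) * Γ ^ n) * Γ) := by
            rw [hΓMpow]
        _ = (M (∏ t ∈ Finset.range n, (γ ^ t) ξ) * M ((γ ^ n) ξ)) * (Γ ^ n * Γ) := by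
            rw [mul_assoc, mul_assoc]
        _ = M (∏ t ∈ Finset.range (n + 1), (γ ^ t) ξ) * Γ ^ (n + 1) := by
            rw [← map_mul, ← Finset.prod_range_succ, ← pow_succ]
  have hΓp : Γ ^ p = 1 := by
    apply LinearMap.ext
    intro z
    rw [hΓ, hγp]
    rfl
  have hVp : V ^ p = algebraMap K (Module.End K L) b := by
    rw [hcprod p, hprod, hΓp, mul_one]
    exact M.commutes b
  -- commuting v-powers past f in A
  have hvf : ∀ (j : ℕ) (y : L), v ^ j * f y = f ((γ ^ j) y) * v ^ j := by
    intro j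
    induction j with
    | zero => intro y; simp
    | succ n ih =>
      intro y
      calc v ^ (n + 1) * f y = v * (v ^ n * f y) := by rw [pow_succ', mul_assoc]
        _ = v * (f ((γ ^ n) y) * v ^ n) := by rw [ih]
        _ = (v * f ((γ ^ n) y)) * v ^ n := by rw [mul_assoc]
        _ = (f (γ ((γ ^ n) y)) * v) * v ^ n := by rw [hrel]
        _ = f ((γ ^ (n + 1)) y) * v ^ (n + 1) := by
            rw [mul_assoc, ← pow_succ', ← AlgEquiv.mul_apply, ← pow_succ']
  have hred : ∀ (j : ℕ), p ≤ j → ∀ x : L,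
      f x * v ^ j = f (x * algebraMap K L b) * v ^ (j - p) := by
    intro j hj x
    have h1 : v ^ j = algebraMap K A b * v ^ (j - p) := by
      rw [← hv, ← pow_add]
      congr 1
      omega
    rw [h1, ← mul_assoc, ← f.commutes, ← map_mul]
  -- a basis of L and the monomial family in A
  let bas : Basis (Fin p) K L := (Module.finBasis K L).reindex (finCongr hdimL)
  let a : Fin p × Fin p → A := fun ij => f (bas ij.1) * v ^ (ij.2 : ℕ)
  have hexp : ∀ (x : L) (jf : Fin p),
      f x * v ^ (jf : ℕ) = ∑ i : Fin p, bas.repr x i • a (i, jf) := by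
    intro x jf
    conv_lhs => rw [← bas.sum_repr x]
    rw [map_sum, Finset.sum_mul]
    apply Finset.sum_congr rfl
    intro i _
    rw [map_smul, smul_mul_assoc]
  have hmonomul : ∀ (i k : Fin p) (jf lf : Fin p),
      a (i, jf) * a (k, lf) =
        f (bas i * (γ ^ (jf : ℕ)) (bas k)) * v ^ ((jf : ℕ) + (lf : ℕ)) := by
    intro i k jf lf
    show f (bas i) * v ^ (jf : ℕ) * (f (bas k) * v ^ (lf : ℕ)) = _
    rw [map_mul, mul_assoc, ← mul_assoc (v ^ (jf : ℕ)), hvf, mul_assoc, ← pow_add, ← mul_assoc]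
  set S : Submodule K A := Submodule.span K (Set.range a) with hSdef
  have hmono : ∀ (j : ℕ) (x : L), f x * v ^ j ∈ S := by
    intro j
    induction j using Nat.strong_induction_on with
    | _ j ih =>
      intro x
      by_cases hj : j < p
      · rw [show j = ((⟨j, hj⟩ : Fin p) : ℕ) from rfl, hexp x ⟨j, hj⟩]
        exact Submodule.sum_mem _ (fun i _ =>
          Submodule.smul_mem _ _ (Submodule.subset_span ⟨(i, ⟨j, hj⟩), rfl⟩))
      · push_neg at hj
        rw [hred j hj x]
        exact ih (j - p) (by omega) _
  have h1S : (1 : A) ∈ S := by simpa using hmono 0 1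
  have hmulS : ∀ x y : A, x ∈ S → y ∈ S → x * y ∈ S := by
    intro x y hx hy
    induction hx, hy using Submodule.span_induction₂ with
    | mem_mem x y hx hy =>
      obtain ⟨⟨i, jf⟩, rfl⟩ := hx
      obtain ⟨⟨k, lf⟩, rfl⟩ := hy
      rw [hmonomul]
      exact hmono _ _
    | zero_left y hy => rw [zero_mul]; exact S.zero_mem
    | zero_right x hx => rw [mul_zero]; exact S.zero_mem
    | add_left x y z hx hy hz h1 h2 => rw [add_mul]; exact S.add_mem h1 h2
    | add_right x y z hx hy hz h1 h2 => rw [mul_add]; exact S.add_mem h1 h2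
    | smul_left c x y hx hy h1 => rw [smul_mul_assoc]; exact S.smul_mem _ h1
    | smul_right c x y hx hy h1 => rw [mul_smul_comm]; exact S.smul_mem _ h1
  have hStop : ∀ z : A, z ∈ S := by
    have hle : Algebra.adjoin K (Set.range ⇑f ∪ {v}) ≤ S.toSubalgebra h1S hmulS := by
      apply Algebra.adjoin_le
      rintro z (⟨x, rfl⟩ | rfl)
      · simpa using hmono 0 x
      · simpa using hmono 1 1
    intro z
    have : z ∈ S.toSubalgebra h1S hmulS := hle (by rw [hgenA]; trivial)
    simpa using this
  haveI hfinA : FiniteDimensional K A := by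
    have hSeq : Submodule.span K (Set.range a) = ⊤ := by
      rw [← hSdef]; exact eq_top_iff.mpr (fun z _ => hStop z)
    exact ⟨hSeq ▸ Submodule.fg_span (Set.finite_range a)⟩
  have hcard : Fintype.card (Fin p × Fin p) = finrank K A := by
    rw [Fintype.card_prod, Fintype.card_fin, hdimA, sq]
  let BB : Basis (Fin p × Fin p) K A :=
    basisOfTopLeSpanOfCardEqFinrank a (fun z _ => hStop z) hcard
  have hBB : ∀ ij, BB ij = a ij := fun ij =>
    congrFun (coe_basisOfTopLeSpanOfCardEqFinrank a _ _) ij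
  let g : Fin p × Fin p → Module.End K L := fun ij => M (bas ij.1) * V ^ (ij.2 : ℕ)
  let φ : A →ₗ[K] Module.End K L := BB.constr K g
  have hφa : ∀ ij, φ (a ij) = g ij := by
    intro ij
    rw [← hBB]
    exact BB.constr_basis K g ij
  have hMx : ∀ x : L, ∑ i : Fin p, bas.repr x i • M (bas i) = M x := by
    intro x
    conv_rhs => rw [← bas.sum_repr x]
    rw [map_sum]
    exact Finset.sum_congr rfl (fun i _ => by rw [map_smul])
  have hkey : ∀ (j : ℕ) (x : L), φ (f x * v ^ j) = M x * V ^ j := by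
    intro j
    induction j using Nat.strong_induction_on with
    | _ j ih =>
      intro x
      by_cases hj : j < p
      · rw [show j = ((⟨j, hj⟩ : Fin p) : ℕ) from rfl, hexp x ⟨j, hj⟩, map_sum]
        calc ∑ i : Fin p, φ (bas.repr x i • a (i, ⟨j, hj⟩))
            = ∑ i : Fin p, bas.repr x i • (M (bas i) * V ^ ((⟨j, hj⟩ : Fin p) : ℕ)) := by
              refine Finset.sum_congr rfl (fun i _ => ?_)
              rw [map_smul, hφa]
          _ = (∑ i : Fin p, bas.repr x i • M (bas i)) * V ^ ((⟨j, hj⟩ : Fin p) : ℕ) := by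
              rw [Finset.sum_mul]
              exact Finset.sum_congr rfl (fun i _ => by rw [smul_mul_assoc])
          _ = M x * V ^ ((⟨j, hj⟩ : Fin p) : ℕ) := by rw [hMx]
      · push_neg at hj
        rw [hred j hj x, ih (j - p) (by omega), map_mul, M.commutes, ← hVp, mul_assoc,
          ← pow_add]
        congr 2
        omega
  have hφ1 : φ 1 = 1 := by
    have h1 : (1 : A) = f 1 * v ^ 0 := by simp
    rw [h1, hkey]
    simp
  have hφmul : ∀ x y : A, φ (x * y) = φ x * φ y := by
    have hFG : (LinearMap.mul K A).compr₂ φ =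
        (LinearMap.mul K (Module.End K L)).compl₁₂ φ φ := by
      apply BB.ext
      intro ij
      apply BB.ext
      intro kl
      simp only [LinearMap.compr₂_apply, LinearMap.mul_apply', LinearMap.compl₁₂_apply]
      rw [hBB, hBB]
      obtain ⟨i, jf⟩ := ij
      obtain ⟨k, lf⟩ := kl
      rw [hmonomul, hkey, hφa, hφa]
      show M (bas i * (γ ^ (jf : ℕ)) (bas k)) * V ^ ((jf : ℕ) + (lf : ℕ)) =
        M (bas i) * V ^ (jf : ℕ) * (M (bas k) * V ^ (lf : ℕ))
      rw [map_mul, pow_add]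
      simp only [mul_assoc]
      congr 1
      rw [← mul_assoc, ← mul_assoc, ← hVMpow]
    intro x y
    have := LinearMap.congr_fun (LinearMap.congr_fun hFG x) y
    simpa using this
  let φA : A →ₐ[K] Module.End K L := AlgHom.ofLinearMap φ hφ1 hφmul
  -- linear independence of the image family g
  let ev : Module.End K L →ₗ[K] (L → L) :=
    { toFun := fun T => ⇑T, map_add' := fun _ _ => rfl, map_smul' := fun _ _ => rfl }
  let mh : Fin p → (L →* L) := fun j => ((γ ^ (j : ℕ) : L ≃ₐ[K] L) : L →* L)
  have hmhinj : Function.Injective mh := fun i j h =>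
    hr_inj i j (DFunLike.congr_fun h r)
  have li1 : LinearIndependent L (fun j : Fin p => ⇑(mh j)) :=
    (linearIndependent_monoidHom L L).comp mh hmhinj
  let c : Fin p → L := fun j => ∏ t ∈ Finset.range (j : ℕ), (γ ^ t) ξ
  have hc0 : ∀ j, c j ≠ 0 := by
    intro j
    apply Finset.prod_ne_zero_iff.mpr
    intro t _
    intro h
    exact hξ0 ((γ ^ t).injective (by rw [h, map_zero]))
  have hgeq : ∀ ij : Fin p × Fin p, ev (g ij) = (bas ij.1 * c ij.2) • ⇑(mh ij.2) := by
    rintro ⟨i, j⟩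
    funext z
    show (M (bas i) * V ^ (j : ℕ)) z = (bas i * c j) • (γ ^ (j : ℕ)) z
    rw [hcprod (j : ℕ)]
    simp only [Module.End.mul_apply]
    rw [hΓ]
    show bas i * ((∏ t ∈ Finset.range (j : ℕ), (γ ^ t) ξ) * (γ ^ (j : ℕ)) z) = _
    rw [smul_eq_mul, mul_assoc]
  have hdli : LinearIndependent K (fun ij : Fin p × Fin p => ev (g ij)) := by
    apply Fintype.linearIndependent_iff.mpr
    intro lam hlam
    have h2 : ∑ j : Fin p, (∑ i : Fin p, lam (i, j) • (bas i * c j)) • ⇑(mh j) = 0 := by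
      rw [← hlam, Fintype.sum_prod_type_right]
      refine Finset.sum_congr rfl (fun j _ => ?_)
      rw [Finset.sum_smul]
      refine Finset.sum_congr rfl (fun i _ => ?_)
      rw [hgeq, smul_assoc]
    have h3 := Fintype.linearIndependent_iff.mp li1 _ h2
    rintro ⟨i, j⟩
    have h4 := h3 j
    have h5 : (∑ i : Fin p, lam (i, j) • bas i) * c j = 0 := by
      rw [Finset.sum_mul, ← h4]
      exact Finset.sum_congr rfl (fun i _ => by rw [smul_mul_assoc])
    have h6 : ∑ i : Fin p, lam (i, j) • bas i = 0 :=
      (mul_eq_zero.mp h5).resolve_right (hc0 j)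
    exact Fintype.linearIndependent_iff.mp bas.linearIndependent _ h6 i
  have hgli : LinearIndependent K g := LinearIndependent.of_comp ev hdli
  have hdimE : finrank K (Module.End K L) = p ^ 2 := by
    rw [Module.finrank_linearMap, hdimL, sq]
  haveI : Nonempty (Fin p) := ⟨⟨0, hp0⟩⟩
  have hcard' : Fintype.card (Fin p × Fin p) = finrank K (Module.End K L) := by
    rw [Fintype.card_prod, Fintype.card_fin, hdimE, sq]
  have hsurj : Function.Surjective φ := by
    intro T
    have hT : T ∈ Submodule.span K (Set.range g) := by
      rw [hgli.span_eq_top_of_card_eq_finrank hcard']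
      trivial
    have hle : Submodule.span K (Set.range g) ≤ LinearMap.range φ :=
      Submodule.span_le.mpr (by rintro _ ⟨ij, rfl⟩; exact ⟨a ij, hφa ij⟩)
    exact hle hT
  have hinj : Function.Injective φ := by
    have h1 := LinearMap.finrank_range_add_finrank_ker φ
    rw [LinearMap.range_eq_top.mpr hsurj, finrank_top, hdimE, hdimA] at h1
    rw [← LinearMap.ker_eq_bot]
    exact Submodule.finrank_eq_zero.mp (by omega)
  exact ⟨(AlgEquiv.ofBijective φA ⟨hinj, hsurj⟩).trans (algEquivMatrix bas)⟩
end

section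
/- Let L/K be a cyclic field extension of prime degree p with Galois group generated by γ, and let A = A(χ,b) be the cyclic algebra with v^p = b ∈ K×. If A is isomorphic to Mat_p(K), then b is a norm for L/K. -/
/-- If the cyclic algebra `A(χ,b)` attached to a cyclic extension `L/K` of prime
degree `p` with Galois group generated by `γ` is isomorphic to `Mat_p(K)`, then
`b` is a norm for `L/K`. -/
theorem stmt_6 (p : ℕ) (hp : p.Prime) (K L : Type*) [Field K] [Field L] [Algebra K L]
    [FiniteDimensional K L] [IsGalois K L]
    (hdeg : Module.finrank K L = p)
    (γ : L ≃ₐ[K] L) (hγ : orderOf γ = p)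
    (b : K) (hb0 : b ≠ 0)
    (A : Type*) [Ring A] [Algebra K A]
    (f : L →ₐ[K] A) (v : A)
    (hv : v ^ p = algebraMap K A b)
    (hrel : ∀ x : L, v * f x = f (γ x) * v)
    (hgenA : Algebra.adjoin K (Set.range ⇑f ∪ {v}) = ⊤)
    (hdimA : Module.finrank K A = p ^ 2)
    (hiso : Nonempty (A ≃ₐ[K] Matrix (Fin p) (Fin p) K)) :
    ∃ ξ : L, Algebra.norm K ξ = b := by
  obtain ⟨g⟩ := hiso
  have hp0 : 0 < p := hp.pos
  set φ : L →ₐ[K] Matrix (Fin p) (Fin p) K := (g : A →ₐ[K] _).comp f with hφdef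
  set w : Matrix (Fin p) (Fin p) K := g v with hwdef
  have hw : ∀ x : L, w * φ x = φ (γ x) * w := by
    intro x
    have := congrArg g (hrel x)
    simpa [map_mul, hwdef, hφdef] using this
  have hwp : w ^ p = algebraMap K (Matrix (Fin p) (Fin p) K) b := by
    rw [hwdef, ← map_pow, hv]
    exact g.commutes b
  set e : Fin p → K := fun _ => 1 with hedef
  have he : e ≠ 0 := by
    intro h
    have := congrFun h ⟨0, hp0⟩
    simp [hedef] at this
  let T : L →ₗ[K] (Fin p → K) :=
    { toFun := fun x => (φ x).mulVec e
      map_add' := fun x y => by simp [map_add, Matrix.add_mulVec]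
      map_smul' := fun r x => by simp [map_smul, Matrix.smul_mulVec] }
  have hTinj : Function.Injective T := by
    rw [injective_iff_map_eq_zero]
    intro x hx
    by_contra hx0
    apply he
    have : (φ x⁻¹).mulVec ((φ x).mulVec e) = 0 := by
      show (φ x⁻¹).mulVec (T x) = 0
      rw [hx]; simp [Matrix.mulVec_zero]
    rw [Matrix.mulVec_mulVec, ← map_mul, inv_mul_cancel₀ hx0, map_one, Matrix.one_mulVec] at this
    exact this
  have hfr : Module.finrank K L = Module.finrank K (Fin p → K) := by
    rw [hdeg, Module.finrank_pi, Fintype.card_fin]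
  have hTsurj : Function.Surjective T :=
    (LinearMap.injective_iff_surjective_of_finrank_eq_finrank hfr).mp hTinj
  obtain ⟨c, hc⟩ := hTsurj (w.mulVec e)
  have hc' : w.mulVec e = (φ c).mulVec e := hc.symm
  have key : ∀ k : ℕ, (w ^ k).mulVec e = (φ (∏ i ∈ Finset.range k, (γ ^ i) c)).mulVec e := by
    intro k
    induction k with
    | zero => simp
    | succ n ih =>
      rw [pow_succ']
      rw [← Matrix.mulVec_mulVec, ih, Matrix.mulVec_mulVec, hw, ← Matrix.mulVec_mulVec, hc',
        Matrix.mulVec_mulVec, ← map_mul]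
      have h1 : ∀ i : ℕ, γ ((γ ^ i) c) = (γ ^ (i + 1)) c := fun i => by
        rw [pow_succ']; rfl
      rw [Finset.prod_range_succ', map_prod]
      simp only [h1, pow_zero, AlgEquiv.one_apply]
  have hcard : Fintype.card (L ≃ₐ[K] L) = p := by
    rw [← Nat.card_eq_fintype_card, IsGalois.card_aut_eq_finrank, hdeg]
  have hbij : Function.Bijective (fun i : Fin p => γ ^ (i : ℕ)) := by
    rw [Fintype.bijective_iff_injective_and_card, Fintype.card_fin, hcard]
    refine ⟨fun i j hij => ?_, rfl⟩
    have h := pow_injOn_Iio_orderOf (x := γ)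
    rw [hγ] at h
    exact Fin.ext (h i.isLt j.isLt hij)
  have hnorm : algebraMap K L (Algebra.norm K c) = ∏ i ∈ Finset.range p, (γ ^ i) c := by
    rw [Algebra.norm_eq_prod_automorphisms]
    rw [← Fintype.prod_bijective _ hbij _ (fun σ => σ c) (fun i => rfl)]
    rw [Fin.prod_univ_eq_prod_range (fun i => (γ ^ i) c) p]
  have hfinal : (algebraMap K (Matrix (Fin p) (Fin p) K) b).mulVec e
      = (algebraMap K (Matrix (Fin p) (Fin p) K) (Algebra.norm K c)).mulVec e := by
    rw [← hwp, key p, ← hnorm, φ.commutes]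
  have : b • e = (Algebra.norm K c) • e := by
    have h1 : (algebraMap K (Matrix (Fin p) (Fin p) K) b).mulVec e = b • e := by
      rw [Algebra.algebraMap_eq_smul_one, Matrix.smul_mulVec, Matrix.one_mulVec]
    have h2 : (algebraMap K (Matrix (Fin p) (Fin p) K) (Algebra.norm K c)).mulVec e
        = (Algebra.norm K c) • e := by
      rw [Algebra.algebraMap_eq_smul_one, Matrix.smul_mulVec, Matrix.one_mulVec]
    rw [← h1, ← h2, hfinal]
  refine ⟨c, ?_⟩
  have := congrFun this ⟨0, hp0⟩
  simpa [hedef] using this.symm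
end

section
/- Let K be a field containing a primitive p-th root of unity ζ_p, and let a, b ∈ K× be non-p-th powers. Let A be the K-algebra generated by x, y with relations x^p = a, y^p = b, xy = ζ_p·yx (the symbol algebra). Then a is a norm for K(b^{1/p})/K if and only if b is a norm for K(a^{1/p})/K. -/
open Polynomial Module

namespace Stmt7Aux

variable {K : Type*} [Field K] {p : ℕ} {ζ b : K}
variable {L : Type*} [Field L] [Algebra K L] [FiniteDimensional K L] {r : L}

theorem aux_minpoly (hp : p.Prime) (hb : ∀ c : K, c ^ p ≠ b)
    (hr : r ^ p = algebraMap K L b) : minpoly K r = X ^ p - C b :=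
  (minpoly.eq_of_irreducible_of_monic (X_pow_sub_C_irreducible_of_prime hp hb)
    (by rw [map_sub, aeval_X_pow, aeval_C, hr, sub_self])
    (monic_X_pow_sub_C b hp.ne_zero)).symm

/-- The power basis of `L` generated by `r`. -/
noncomputable def pbase (hgen : Algebra.adjoin K {r} = ⊤) : PowerBasis K L :=
  (Algebra.adjoin.powerBasis (IsIntegral.of_finite K r)).map
    ((Subalgebra.equivOfEq _ _ hgen).trans Subalgebra.topEquiv)

theorem pbase_gen (hgen : Algebra.adjoin K {r} = ⊤) : (pbase hgen).gen = r := by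
  simp [pbase]

theorem aux_finrank (hp : p.Prime) (hb : ∀ c : K, c ^ p ≠ b)
    (hr : r ^ p = algebraMap K L b) (hgen : Algebra.adjoin K {r} = ⊤) :
    finrank K L = p := by
  rw [(pbase hgen).finrank, pbase, PowerBasis.map_dim, Algebra.adjoin.powerBasis_dim,
    aux_minpoly hp hb hr, natDegree_X_pow_sub_C]

theorem exists_sigma (hp : p.Prime) (hζ : IsPrimitiveRoot ζ p) (hb : ∀ c : K, c ^ p ≠ b)
    (hr : r ^ p = algebraMap K L b) (hgen : Algebra.adjoin K {r} = ⊤) :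
    ∃ σ : L ≃ₐ[K] L, σ r = algebraMap K L ζ * r := by
  have hroot : aeval (algebraMap K L ζ * r) (minpoly K (pbase hgen).gen) = 0 := by
    rw [pbase_gen, aux_minpoly hp hb hr]
    rw [map_sub, aeval_X_pow, aeval_C, mul_pow, ← map_pow, hζ.pow_eq_one, map_one, one_mul,
      hr, sub_self]
  set σ₀ := (pbase hgen).lift _ hroot with hσ₀
  have hinj : Function.Injective σ₀ := σ₀.toRingHom.injective
  have hsurj : Function.Surjective σ₀ := by
    have := (LinearMap.injective_iff_surjective (f := σ₀.toLinearMap)).mp (by simpa using hinj)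
    simpa using this
  have hbij : Function.Bijective σ₀ := ⟨hinj, hsurj⟩
  refine ⟨AlgEquiv.ofBijective σ₀ hbij, ?_⟩
  show σ₀ r = _
  conv_lhs => rw [← pbase_gen hgen]
  exact PowerBasis.lift_gen _ _ _

theorem sigma_pow_r (σ : L ≃ₐ[K] L) (hσ : σ r = algebraMap K L ζ * r) (k : ℕ) :
    (σ ^ k) r = (algebraMap K L ζ) ^ k * r := by
  induction k with
  | zero => simp
  | succ k ih =>
    rw [pow_succ', AlgEquiv.mul_apply, ih, map_mul, map_pow, AlgEquiv.commutes, hσ, pow_succ']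
    ring

theorem sigma_pow_p (hζ : IsPrimitiveRoot ζ p) (hgen : Algebra.adjoin K {r} = ⊤)
    (σ : L ≃ₐ[K] L) (hσ : σ r = algebraMap K L ζ * r) : σ ^ p = 1 := by
  ext x
  have hx : x ∈ Algebra.adjoin K ({r} : Set L) := hgen ▸ Algebra.mem_top
  show (σ ^ p) x = x
  induction hx using Algebra.adjoin_induction with
  | mem y hy =>
    obtain rfl : y = r := hy
    rw [sigma_pow_r σ hσ, ← map_pow, hζ.pow_eq_one, map_one, one_mul]
  | algebraMap k => exact AlgEquiv.commutes _ _
  | add x y hx hy ihx ihy => rw [map_add, ihx, ihy]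
  | mul x y hx hy ihx ihy => rw [map_mul, ihx, ihy]

theorem aux_isSplittingField (hp : p.Prime) (hζ : IsPrimitiveRoot ζ p) (hb0 : b ≠ 0)
    (hr : r ^ p = algebraMap K L b) (hgen : Algebra.adjoin K {r} = ⊤) :
    IsSplittingField K L (X ^ p - C b) := by
  constructor
  · rw [Polynomial.map_sub, Polynomial.map_pow, Polynomial.map_C,
      Polynomial.map_X]
    exact X_pow_sub_C_splits_of_isPrimitiveRoot
      (hζ.map_of_injective (algebraMap K L).injective) hr
  · rw [eq_top_iff, ← hgen]
    apply Algebra.adjoin_mono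
    rw [Set.singleton_subset_iff, mem_rootSet_of_ne (X_pow_sub_C_ne_zero hp.pos b)]
    simp [hr]

theorem norm_prod (hp : p.Prime) (hζ : IsPrimitiveRoot ζ p) (hb0 : b ≠ 0)
    (hb : ∀ c : K, c ^ p ≠ b)
    (hr : r ^ p = algebraMap K L b) (hgen : Algebra.adjoin K {r} = ⊤)
    (σ : L ≃ₐ[K] L) (hσ : σ r = algebraMap K L ζ * r) (ξ : L) :
    algebraMap K L (Algebra.norm K ξ) = ∏ i ∈ Finset.range p, (σ ^ i) ξ := by
  haveI : IsSplittingField K L (X ^ p - C b) := aux_isSplittingField hp hζ hb0 hr hgen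
  haveI : IsGalois K L := isGalois_of_isSplittingField_X_pow_sub_C
    ⟨ζ, (mem_primitiveRoots hp.pos).mpr hζ⟩ (X_pow_sub_C_irreducible_of_prime hp hb) L
  have hcard : Fintype.card (L ≃ₐ[K] L) = p := by
    rw [← Nat.card_eq_fintype_card, IsGalois.card_aut_eq_finrank, aux_finrank hp hb hr hgen]
  have hrne : r ≠ 0 := by
    intro h0
    exact hb0 (by
      have : (0 : L) = algebraMap K L b := by rw [← hr, h0, zero_pow hp.ne_zero]
      exact ((map_eq_zero_iff _ (algebraMap K L).injective).mp this.symm))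
  have hσ1 : σ ≠ 1 := by
    intro h
    have h1 : algebraMap K L ζ * r = 1 * r := by
      rw [one_mul, ← hσ, h]; rfl
    have hζ1 : algebraMap K L ζ = 1 := mul_right_cancel₀ hrne h1
    exact hζ.ne_one hp.one_lt ((algebraMap K L).injective (by rw [hζ1, map_one]))
  have hord : orderOf σ = p := by
    rcases hp.eq_one_or_self_of_dvd (orderOf σ) (hcard ▸ orderOf_dvd_card) with h | h
    · exact absurd (orderOf_eq_one_iff.mp h) hσ1
    · exact h
  have hbij : Function.Bijective (fun i : Fin p => σ ^ (i : ℕ)) := by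
    rw [Fintype.bijective_iff_injective_and_card]
    refine ⟨fun i j hij => ?_, by simp [hcard]⟩
    exact Fin.ext (pow_injOn_Iio_orderOf (by simpa [hord] using i.isLt)
      (by simpa [hord] using j.isLt) hij)
  rw [Algebra.norm_eq_prod_automorphisms,
    ← Fintype.prod_bijective _ hbij (fun i : Fin p => (σ ^ (i : ℕ)) ξ) _ (fun i => rfl)]
  exact Fin.prod_univ_eq_prod_range (fun i => (σ ^ i) ξ) p


set_option maxHeartbeats 2000000 in
theorem rep_to_norm {a : K} (hp : p.Prime) (hζ : IsPrimitiveRoot ζ p) (ha0 : a ≠ 0)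
    (hb : ∀ c : K, c ^ p ≠ b) (hb0 : b ≠ 0)
    (hr : r ^ p = algebraMap K L b) (hgen : Algebra.adjoin K {r} = ⊤)
    {n : ℕ} (hn : 0 < n) (hnd : ¬ p ^ 2 ∣ n)
    {X Y : Module.End K (Fin n → K)}
    (hX : X ^ p = a • 1) (hY : Y ^ p = b • 1) (hXY : X * Y = ζ • (Y * X)) :
    ∃ ξ : L, Algebra.norm K ξ = a := by
  classical
  obtain ⟨σ, hσ⟩ := exists_sigma hp hζ hb hr hgen
  have hσp := sigma_pow_p hζ hgen σ hσ
  -- the algebra map `φ : L →ₐ[K] End K V` sending `r` to `Y`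
  have hroot : aeval Y (minpoly K (pbase hgen).gen) = 0 := by
    rw [pbase_gen, aux_minpoly hp hb hr, map_sub, aeval_X_pow, aeval_C, hY,
      Algebra.algebraMap_eq_smul_one, sub_self]
  set φ := (pbase hgen).lift Y hroot with hφdef
  have hφr : φ r = Y := by
    have h := PowerBasis.lift_gen (pbase hgen) Y hroot
    rw [pbase_gen hgen] at h
    exact h
  -- `V` as an `L`-vector space via `φ`
  letI : SMul L (Fin n → K) := ⟨fun c v => φ c v⟩
  have hsmul : ∀ (c : L) (v : Fin n → K), c • v = φ c v := fun _ _ => rfl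
  letI : Module L (Fin n → K) :=
    { one_smul := fun v => by rw [hsmul, map_one]; rfl
      mul_smul := fun c d v => by rw [hsmul, hsmul, hsmul, map_mul]; rfl
      smul_zero := fun c => by rw [hsmul]; exact map_zero (φ c)
      smul_add := fun c u v => by rw [hsmul, hsmul, hsmul]; exact map_add (φ c) u v
      add_smul := fun c d v => by rw [hsmul, hsmul, hsmul, map_add]; rfl
      zero_smul := fun v => by rw [hsmul, map_zero]; rfl }
  letI : IsScalarTower K L (Fin n → K) :=
    ⟨fun k c v => by rw [hsmul, hsmul, map_smul, LinearMap.smul_apply]⟩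
  haveI : FiniteDimensional L (Fin n → K) := Module.Finite.right K L (Fin n → K)
  set d := finrank L (Fin n → K) with hd
  have hdim : p * d = n := by
    have h1 := Module.finrank_mul_finrank K L (Fin n → K)
    rw [aux_finrank hp hb hr hgen, Module.finrank_fin_fun] at h1
    exact h1
  have hd0 : d ≠ 0 := by
    intro h
    rw [h, mul_zero] at hdim
    omega
  have hpd : ¬ p ∣ d := by
    rintro ⟨e, he⟩
    exact hnd ⟨e, by rw [← hdim, he]; ring⟩
  -- X is σ-semilinear
  have hcomm : ∀ c : L, φ (σ c) * X = X * φ c := by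
    intro c
    have hc : c ∈ Algebra.adjoin K ({r} : Set L) := hgen ▸ Algebra.mem_top
    induction hc using Algebra.adjoin_induction with
    | mem y hy =>
      obtain rfl : y = r := hy
      rw [hσ, map_mul, AlgHom.commutes, hφr, Algebra.algebraMap_eq_smul_one,
        smul_mul_assoc, one_mul, smul_mul_assoc, hXY]
    | algebraMap k =>
      rw [AlgEquiv.commutes, AlgHom.commutes]
      exact Algebra.commutes' k X
    | add x y hx hy ihx ihy => simp only [map_add, add_mul, mul_add, ihx, ihy]
    | mul x y hx hy ihx ihy =>
      rw [map_mul, map_mul, mul_assoc, ihy, ← mul_assoc, ihx, mul_assoc, map_mul]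
  have hXs : ∀ (c : L) (v : Fin n → K), X (c • v) = σ c • X v := by
    intro c v
    rw [hsmul, hsmul]
    calc X (φ c v) = (X * φ c) v := rfl
    _ = (φ (σ c) * X) v := by rw [hcomm]
    _ = φ (σ c) (X v) := rfl
  -- the matrix of X in an L-basis of V
  set B : Basis (Fin d) L (Fin n → K) := Module.finBasis L (Fin n → K) with hB
  set M : Matrix (Fin d) (Fin d) L := Matrix.of (fun i j => B.repr (X (B j)) i) with hMdef
  have hM : ∀ (v : Fin n → K) (i : Fin d), B.repr (X v) i = ∑ j, M i j * σ (B.repr v j) := by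
    intro v i
    conv_lhs => rw [← B.sum_repr v]
    rw [map_sum X]
    simp only [hXs]
    simp only [map_sum, map_smul, Finsupp.coe_finset_sum, Finset.sum_apply,
      Finsupp.finset_sum_apply, Finsupp.smul_apply, smul_eq_mul]
    exact Finset.sum_congr rfl fun j _ => mul_comm _ _
  set P : ℕ → Matrix (Fin d) (Fin d) L := fun k =>
    Nat.rec (1 : Matrix (Fin d) (Fin d) L) (fun k Pk => Pk * M.map ⇑(σ ^ k)) k with hPdef
  have hP : ∀ (k : ℕ) (v : Fin n → K) (i : Fin d),
      B.repr ((X ^ k) v) i = ∑ j, P k i j * (σ ^ k) (B.repr v j) := by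
    intro k
    induction k with
    | zero =>
      intro v i
      simp [hPdef, Matrix.one_apply, pow_zero]
    | succ k ih =>
      intro v i
      have e1 : ∀ x : L, (σ ^ k) (σ x) = (σ ^ (k + 1)) x := fun x => by
        rw [pow_succ, AlgEquiv.mul_apply]
      calc B.repr ((X ^ (k + 1)) v) i
          = B.repr ((X ^ k) (X v)) i := by rw [pow_succ]; rfl
        _ = ∑ j, P k i j * (σ ^ k) (B.repr (X v) j) := ih (X v) i
        _ = ∑ j, P k i j * (σ ^ k) (∑ l, M j l * σ (B.repr v l)) := by
            simp only [hM]
        _ = ∑ j, ∑ l, (P k i j * (σ ^ k) (M j l)) * (σ ^ (k + 1)) (B.repr v l) := by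
            refine Finset.sum_congr rfl fun j _ => ?_
            rw [map_sum, Finset.mul_sum]
            refine Finset.sum_congr rfl fun l _ => ?_
            rw [map_mul, e1]
            ring
        _ = ∑ l, (∑ j, P k i j * (σ ^ k) (M j l)) * (σ ^ (k + 1)) (B.repr v l) := by
            rw [Finset.sum_comm]
            simp only [Finset.sum_mul]
        _ = ∑ l, P (k + 1) i l * (σ ^ (k + 1)) (B.repr v l) := by
            refine Finset.sum_congr rfl fun l _ => ?_
            have hPk : P (k + 1) i l = ∑ j, P k i j * (σ ^ k) (M j l) := by
              show (P k * M.map ⇑(σ ^ k)) i l = _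
              rw [Matrix.mul_apply]
              exact Finset.sum_congr rfl fun j _ => rfl
            rw [hPk]
  -- `P p` is the scalar matrix of `a`
  have hσpL : ∀ x : L, (σ ^ p) x = x := fun x => by rw [hσp]; rfl
  have hPp : ∀ i j, P p i j = (if j = i then algebraMap K L a else 0) := by
    intro i j
    have h2 : (X ^ p) (B j) = algebraMap K L a • (B j) := by
      rw [hX, LinearMap.smul_apply, Module.End.one_apply, algebraMap_smul]
    have h0 := hP p (B j) i
    rw [h2] at h0
    simp only [map_smul, Finsupp.smul_apply, smul_eq_mul] at h0
    have h1 : algebraMap K L a * ((B.repr (B j)) i) = ∑ l, P p i l * ((B.repr (B j)) l) := by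
      rw [h0]
      exact Finset.sum_congr rfl fun l _ => by rw [hσpL]
    simp only [Basis.repr_self_apply, mul_ite, mul_one, mul_zero, Finset.sum_ite_eq,
      Finset.mem_univ, if_true] at h1
    exact h1.symm
  have hPpdet : (P p).det = (algebraMap K L a) ^ d := by
    have hmat : P p = algebraMap K L a • (1 : Matrix (Fin d) (Fin d) L) := by
      ext i j
      rw [hPp i j]
      by_cases h : i = j
      · subst h; simp
      · simp [Matrix.smul_apply, Matrix.one_apply, h, (Ne.symm h : j ≠ i)]
    rw [hmat, Matrix.det_smul, Matrix.det_one, mul_one, Fintype.card_fin]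
  have hPdet : ∀ k : ℕ, (P k).det = ∏ i ∈ Finset.range k, (σ ^ i) M.det := by
    intro k
    induction k with
    | zero => simp [hPdef]
    | succ k ih =>
      rw [show P (k + 1) = P k * M.map ⇑(σ ^ k) from rfl, Matrix.det_mul, ih,
        Finset.prod_range_succ]
      congr 1
      exact (RingHom.map_det ((σ ^ k : L ≃ₐ[K] L) : L →+* L) M).symm
  -- so the norm of det M is a ^ d
  have hnorm : Algebra.norm K M.det = a ^ d := by
    apply (algebraMap K L).injective
    rw [norm_prod hp hζ hb0 hb hr hgen σ hσ M.det, ← hPdet, hPpdet, map_pow]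
  -- arithmetic: find u, t with d * u = p * t + 1
  haveI := Fact.mk hp
  have hdz : (d : ZMod p) ≠ 0 := by
    rwa [Ne, ZMod.natCast_eq_zero_iff]
  set u := ((d : ZMod p)⁻¹).val with hu
  have hcast : ((d * u : ℕ) : ZMod p) = ((1 : ℕ) : ZMod p) := by
    push_cast
    rw [hu, ZMod.natCast_val, ZMod.cast_id, mul_inv_cancel₀ hdz]
  have hmod : d * u % p = 1 % p := (ZMod.natCast_eq_natCast_iff _ _ _).mp hcast
  rw [Nat.mod_eq_of_lt hp.one_lt] at hmod
  obtain ⟨t, hdu⟩ : ∃ t, d * u = p * t + 1 :=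
    ⟨d * u / p, by have := Nat.div_add_mod (d * u) p; omega⟩
  refine ⟨M.det ^ u * algebraMap K L (a⁻¹ ^ t), ?_⟩
  rw [map_mul (Algebra.norm K) (M.det ^ u) (algebraMap K L (a⁻¹ ^ t)),
    map_pow (Algebra.norm K) M.det u, hnorm, Algebra.norm_algebraMap,
    aux_finrank hp hb hr hgen, ← pow_mul, ← pow_mul, hdu, inv_pow, mul_comm t p, pow_add,
    pow_one, mul_right_comm, mul_inv_cancel₀ (pow_ne_zero _ ha0), one_mul]


set_option maxHeartbeats 1000000 in
theorem norm_to_rep {a : K} (hp : p.Prime) (hζ : IsPrimitiveRoot ζ p)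
    (hb : ∀ c : K, c ^ p ≠ b) (hb0 : b ≠ 0)
    (hr : r ^ p = algebraMap K L b) (hgen : Algebra.adjoin K {r} = ⊤)
    (ξ : L) (hξ : Algebra.norm K ξ = a) :
    ∃ (n : ℕ) (X Y : Module.End K (Fin n → K)),
      0 < n ∧ ¬ p ^ 2 ∣ n ∧ X ^ p = a • 1 ∧ Y ^ p = b • 1 ∧ X * Y = ζ • (Y * X) := by
  classical
  obtain ⟨σ, hσ⟩ := exists_sigma hp hζ hb hr hgen
  have hσp := sigma_pow_p hζ hgen σ hσ
  set X₀ : Module.End K L := (Algebra.lmul K L ξ) * σ.toLinearMap with hX₀def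
  set Y₀ : Module.End K L := Algebra.lmul K L r with hY₀def
  have htl : ∀ k : ℕ, ((σ ^ k : L ≃ₐ[K] L)).toLinearMap * σ.toLinearMap
      = ((σ ^ (k + 1) : L ≃ₐ[K] L)).toLinearMap := by
    intro k
    ext v
    show (σ ^ k) (σ v) = (σ ^ (k + 1)) v
    rw [pow_succ, AlgEquiv.mul_apply]
  have hc : ∀ k : ℕ, X₀ ^ k =
      (Algebra.lmul K L (∏ i ∈ Finset.range k, (σ ^ i) ξ)) *
        ((σ ^ k : L ≃ₐ[K] L)).toLinearMap := by
    intro k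
    induction k with
    | zero =>
      rw [pow_zero, Finset.range_zero, Finset.prod_empty, map_one, one_mul, pow_zero]
      ext v
      rfl
    | succ k ih =>
      have key : ((σ ^ k : L ≃ₐ[K] L)).toLinearMap * Algebra.lmul K L ξ
          = Algebra.lmul K L ((σ ^ k) ξ) * ((σ ^ k : L ≃ₐ[K] L)).toLinearMap := by
        ext v
        show (σ ^ k) (ξ * v) = (σ ^ k) ξ * (σ ^ k) v
        exact map_mul _ _ _
      rw [pow_succ, ih, hX₀def, ← mul_assoc, mul_assoc _ _ (Algebra.lmul K L ξ), key,
        ← mul_assoc, ← map_mul, ← Finset.prod_range_succ, mul_assoc, htl]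
  have hX₀p : X₀ ^ p = a • (1 : Module.End K L) := by
    rw [hc p, ← norm_prod hp hζ hb0 hb hr hgen σ hσ ξ, hξ, hσp]
    have h1 : ((1 : L ≃ₐ[K] L)).toLinearMap = (1 : Module.End K L) := by ext v; rfl
    rw [h1, mul_one, AlgHom.commutes, Module.algebraMap_end_eq_smul_id]
    rfl
  have hY₀p : Y₀ ^ p = b • (1 : Module.End K L) := by
    rw [hY₀def, ← map_pow, hr, AlgHom.commutes, Module.algebraMap_end_eq_smul_id]
    rfl
  have hXY₀ : X₀ * Y₀ = ζ • (Y₀ * X₀) := by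
    ext v
    show ξ * σ (r * v) = ζ • (r * (ξ * σ v))
    rw [map_mul, hσ, Algebra.smul_def]
    ring
  -- transport to `Fin (finrank K L) → K`
  set m := finrank K L with hm
  set e : L ≃ₗ[K] (Fin m → K) := (Module.finBasis K L).equivFun with he
  have hFmul : ∀ f g : Module.End K L, e.conj (f * g) = e.conj f * e.conj g := by
    intro f g
    exact e.conj_comp g f
  have hFone : e.conj (1 : Module.End K L) = 1 := e.conj_id
  have hFpow : ∀ (f : Module.End K L) (k : ℕ), e.conj (f ^ k) = (e.conj f) ^ k := by
    intro f k
    induction k with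
    | zero => rw [pow_zero, pow_zero, hFone]
    | succ k ih => rw [pow_succ, pow_succ, hFmul, ih]
  have hFsmul : ∀ (c : K) (f : Module.End K L), e.conj (c • f) = c • e.conj f :=
    fun c f => map_smul e.conj c f
  refine ⟨m, e.conj X₀, e.conj Y₀, ?_, ?_, ?_, ?_, ?_⟩
  · rw [hm, aux_finrank hp hb hr hgen]
    exact hp.pos
  · rw [hm, aux_finrank hp hb hr hgen]
    intro hdvd
    have h2 := Nat.le_of_dvd hp.pos hdvd
    have h3 := hp.two_le
    nlinarith [sq_nonneg p]
  · rw [← hFpow, hX₀p, hFsmul, hFone]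
  · rw [← hFpow, hY₀p, hFsmul, hFone]
  · rw [← hFmul, ← hFmul, hXY₀, hFsmul]

end Stmt7Aux

/-- For `K` containing a primitive `p`-th root of unity and `a, b ∈ K×` non-`p`-th
powers: `a` is a norm for `K(b^{1/p})/K` iff `b` is a norm for `K(a^{1/p})/K`
(both conditions being equivalent to the symbol algebra `(a,b)_{ζ_p}` being split). -/
theorem stmt_7 (p : ℕ) (hp : p.Prime) (K : Type*) [Field K]
    (ζ : K) (hζ : IsPrimitiveRoot ζ p)
    (a b : K) (ha0 : a ≠ 0) (hb0 : b ≠ 0)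
    (ha : ¬ ∃ c : K, c ^ p = a) (hb : ¬ ∃ c : K, c ^ p = b)
    (La Lb : Type*) [Field La] [Algebra K La] [FiniteDimensional K La]
    [Field Lb] [Algebra K Lb] [FiniteDimensional K Lb]
    (ra : La) (hra : ra ^ p = algebraMap K La a)
    (hgena : Algebra.adjoin K {ra} = ⊤)
    (rb : Lb) (hrb : rb ^ p = algebraMap K Lb b)
    (hgenb : Algebra.adjoin K {rb} = ⊤) :
    (∃ ξ : Lb, Algebra.norm K ξ = a) ↔ (∃ ξ : La, Algebra.norm K ξ = b) := by
  push_neg at ha hb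
  have hζ0 : ζ ≠ 0 := by
    intro h
    have := hζ.pow_eq_one
    rw [h, zero_pow hp.ne_zero] at this
    exact zero_ne_one this
  have hζinv : IsPrimitiveRoot ζ⁻¹ p := hζ.inv
  constructor
  · rintro ⟨ξ, hξ⟩
    obtain ⟨n, X, Y, hn, hnd, hXp, hYp, hXY⟩ :=
      Stmt7Aux.norm_to_rep hp hζ hb hb0 hrb hgenb ξ hξ
    have hYX : Y * X = ζ⁻¹ • (X * Y) := by
      rw [hXY, smul_smul, inv_mul_cancel₀ hζ0, one_smul]
    exact Stmt7Aux.rep_to_norm hp hζinv hb0 ha ha0 hra hgena hn hnd hYp hXp hYX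
  · rintro ⟨η, hη⟩
    obtain ⟨n, X, Y, hn, hnd, hXp, hYp, hXY⟩ :=
      Stmt7Aux.norm_to_rep hp hζinv ha ha0 hra hgena η hη
    have hYX : Y * X = ζ • (X * Y) := by
      rw [hXY, smul_smul, mul_inv_cancel₀ hζ0, one_smul]
    exact Stmt7Aux.rep_to_norm hp hζ ha0 hb hb0 hrb hgenb hn hnd hYp hXp hYX
end

section
/- With inputs positive integers a ≤ b ≤ B, Algorithm 3.6 (the Legendre-type algorithm for cubic norm equations) terminates after O((log B)²) iterations. Specifically: in the 'reduction' step b_new < (3/4)·b with a unchanged; whenever the 'swap' step b₂·F(u,v) ≥ (3/4)·b occurs one has b < 1.93·a, a_new = b − a < 0.93·a, and b_new = a²b < 2a³; consequently the total number of iterations is O((log B)²). -/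
lemma key1 (a b : ℝ) (ha : 1 ≤ a) (hb : 1 ≤ b)
    (h : (3 / 4) * b ≤ (27 / 23 : ℝ) ^ ((1 : ℝ) / 4) * (a * b) ^ ((1 : ℝ) / 2)) :
    b < 1.93 * a := by
  have hab : (0:ℝ) < a * b := by nlinarith
  have hc : (0:ℝ) < (27 / 23 : ℝ) ^ ((1 : ℝ) / 4) := Real.rpow_pos_of_pos (by norm_num) _
  have hx : (0:ℝ) ≤ (a * b) ^ ((1 : ℝ) / 2) := (Real.rpow_pos_of_pos hab _).le
  have hsq : ((3 / 4) * b) ^ 2 ≤ ((27 / 23 : ℝ) ^ ((1 : ℝ) / 4)) ^ 2 * ((a * b) ^ ((1 : ℝ) / 2)) ^ 2 := by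
    have := pow_le_pow_left₀ (by linarith : (0:ℝ) ≤ (3/4) * b) h 2
    calc ((3 / 4) * b) ^ 2 ≤ ((27 / 23 : ℝ) ^ ((1 : ℝ) / 4) * (a * b) ^ ((1 : ℝ) / 2)) ^ 2 := this
      _ = _ := by ring
  have e1 : ((27 / 23 : ℝ) ^ ((1 : ℝ) / 4)) ^ 2 = (27 / 23 : ℝ) ^ ((1 : ℝ) / 2) := by
    rw [← Real.rpow_natCast ((27 / 23 : ℝ) ^ ((1 : ℝ) / 4)) 2, ← Real.rpow_mul (by norm_num)]
    norm_num
  have e2 : ((a * b) ^ ((1 : ℝ) / 2)) ^ 2 = a * b := by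
    rw [← Real.rpow_natCast ((a * b) ^ ((1 : ℝ) / 2)) 2, ← Real.rpow_mul hab.le]
    norm_num
  have e3 : (27 / 23 : ℝ) ^ ((1 : ℝ) / 2) ≤ 1.0835 := by
    rw [← Real.sqrt_eq_rpow]
    have h1 : Real.sqrt (27/23) ≤ Real.sqrt ((1.0835:ℝ)^2) := Real.sqrt_le_sqrt (by norm_num)
    rwa [Real.sqrt_sq (by norm_num)] at h1
  rw [e1, e2] at hsq
  nlinarith [hsq, e3, hab, mul_pos (lt_of_lt_of_le one_pos ha) (lt_of_lt_of_le one_pos hb)]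

/-- Quantitative analysis of Algorithm 3.6 (Legendre-type algorithm for cubic norm
equations).  First part: if the "swap" condition `(3/4)b ≤ (27/23)^{1/4}(ab)^{1/2}`
holds then `b < 1.93a`, `a_new = b − a < 0.93a` and `b_new = a²b < 2a³`.
Second part: any run of the algorithm — a sequence of pairs of positive integers
where each step is either a reduction step (`a` unchanged, `b_new < (3/4)b`) or a
swap step (requiring `(3/4)b ≤ (27/23)^{1/4}(ab)^{1/2}`, with `a_new = b − a`,
`b_new = a²b`) — starting from `a, b ≤ B` takes `O((log B)²)` iterations. -/
theorem stmt_13 :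
    (∀ a b : ℝ, 1 ≤ a → 1 ≤ b →
      (3 / 4) * b ≤ (27 / 23 : ℝ) ^ ((1 : ℝ) / 4) * (a * b) ^ ((1 : ℝ) / 2) →
      b < 1.93 * a ∧ b - a < 0.93 * a ∧ a ^ 2 * b < 2 * a ^ 3) ∧
    ∃ C : ℝ, 0 < C ∧ ∀ B : ℕ, 2 ≤ B → ∀ N : ℕ, ∀ s : ℕ → ℕ × ℕ,
      (s 0).1 ≤ B → (s 0).2 ≤ B →
      (∀ n, n ≤ N → 1 ≤ (s n).1 ∧ 1 ≤ (s n).2) →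
      (∀ n, n < N →
        ((s (n + 1)).1 = (s n).1 ∧ ((s (n + 1)).2 : ℝ) < (3 / 4) * (s n).2) ∨
        ((3 / 4 : ℝ) * (s n).2 ≤
            (27 / 23 : ℝ) ^ ((1 : ℝ) / 4) * (((s n).1 * (s n).2 : ℕ) : ℝ) ^ ((1 : ℝ) / 2) ∧
          (s (n + 1)).1 + (s n).1 = (s n).2 ∧
          (s (n + 1)).2 = (s n).1 ^ 2 * (s n).2)) →
      (N : ℝ) ≤ C * Real.log B ^ 2 := by
  constructor
  · intro a b ha hb h
    have hlt := key1 a b ha hb h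
    refine ⟨hlt, by linarith, ?_⟩
    nlinarith [hlt, ha, sq_nonneg a, mul_pos (lt_of_lt_of_le one_pos ha) (lt_of_lt_of_le one_pos ha)]
  · set r : ℝ := Real.log (100/93) with hr_def
    set q : ℝ := Real.log (4/3) with hq_def
    have hr : 0 < r := Real.log_pos (by norm_num)
    have hq : 0 < q := Real.log_pos (by norm_num)
    refine ⟨(3 / r + 2) / q, by positivity, ?_⟩
    intro B hB N s h0a h0b hpos hstep
    -- real-valued coordinates
    set a : ℕ → ℝ := fun n => ((s n).1 : ℝ) with ha_def
    set b : ℕ → ℝ := fun n => ((s n).2 : ℝ) with hb_def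
    have hpos' : ∀ n, n ≤ N → 1 ≤ a n ∧ 1 ≤ b n := by
      intro n hn
      constructor
      · show (1:ℝ) ≤ ((s n).1:ℝ); exact_mod_cast (hpos n hn).1
      · show (1:ℝ) ≤ ((s n).2:ℝ); exact_mod_cast (hpos n hn).2
    -- reformulated step
    have hkey : ∀ n, n < N →
        (a (n+1) = a n ∧ b (n+1) < 3/4 * b n) ∨
        (a (n+1) < 0.93 * a n ∧ b (n+1) = a n ^ 2 * b n) := by
      intro n hn
      rcases hstep n hn with ⟨h1, h2⟩ | ⟨hc, hsum, hb'⟩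
      · left; exact ⟨by simp [ha_def, h1], h2⟩
      · right
        obtain ⟨h1a, h1b⟩ := hpos' n hn.le
        have hc' : (3 / 4) * b n ≤ (27 / 23 : ℝ) ^ ((1 : ℝ) / 4) * (a n * b n) ^ ((1 : ℝ) / 2) := by
          push_cast at hc; exact hc
        have hlt := key1 (a n) (b n) h1a h1b hc'
        have hsum' : a (n+1) + a n = b n := by
          show ((s (n+1)).1:ℝ) + ((s n).1:ℝ) = ((s n).2:ℝ); exact_mod_cast hsum
        have hb'' : b (n+1) = a n ^ 2 * b n := by
          show ((s (n+1)).2:ℝ) = ((s n).1:ℝ) ^ 2 * ((s n).2:ℝ)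
          rw [hb']; push_cast; ring
        exact ⟨by linarith, hb''⟩
    -- a is bounded by B along the run
    have haB : ∀ n, n ≤ N → a n ≤ B := by
      intro n
      induction n with
      | zero => intro _; show ((s 0).1:ℝ) ≤ (B:ℝ); exact_mod_cast h0a
      | succ n ih =>
        intro hn
        have hn' : n < N := hn
        have h1a := (hpos' n hn'.le).1
        rcases hkey n hn' with ⟨h1, _⟩ | ⟨h1, _⟩
        · rw [h1]; exact ih hn'.le
        · have : a (n+1) ≤ a n := by linarith
          exact this.trans (ih hn'.le)
    -- constants and potential
    set M : ℝ := (2 * Real.log B + q) / r with hM_def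
    have hlogB0 : 0 ≤ Real.log B := Real.log_nonneg (by exact_mod_cast hB.trans' (by norm_num))
    have hM0 : 0 ≤ M := by positivity
    set Φ : ℕ → ℝ := fun n => M * Real.log (a n) + Real.log (b n) with hΦ_def
    have hstepΦ : ∀ n, n < N → Φ (n+1) + q ≤ Φ n := by
      intro n hn
      obtain ⟨h1a, h1b⟩ := hpos' n hn.le
      obtain ⟨h2a, h2b⟩ := hpos' (n+1) hn
      have hposa : (0:ℝ) < a n := lt_of_lt_of_le one_pos h1a
      have hposb : (0:ℝ) < b n := lt_of_lt_of_le one_pos h1b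
      rcases hkey n hn with ⟨h1, h2⟩ | ⟨h1, h2⟩
      · -- reduction step
        have : Real.log (b (n+1)) ≤ Real.log (3/4 * b n) :=
          Real.log_le_log (lt_of_lt_of_le one_pos h2b) h2.le
        rw [Real.log_mul (by norm_num) (ne_of_gt hposb)] at this
        have e : Real.log (3/4 : ℝ) = -q := by
          rw [hq_def, show (3/4:ℝ) = (4/3:ℝ)⁻¹ by norm_num, Real.log_inv]
        simp only [hΦ_def, h1]
        linarith [this, e ▸ this]
      · -- swap step
        have hla : Real.log (a (n+1)) ≤ Real.log (0.93 * a n) :=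
          Real.log_le_log (lt_of_lt_of_le one_pos h2a) h1.le
        rw [Real.log_mul (by norm_num) (ne_of_gt hposa)] at hla
        have e : Real.log (0.93 : ℝ) = -r := by
          rw [hr_def, show (0.93:ℝ) = (100/93:ℝ)⁻¹ by norm_num, Real.log_inv]
        rw [e] at hla
        have hlb : Real.log (b (n+1)) = 2 * Real.log (a n) + Real.log (b n) := by
          rw [h2, Real.log_mul (by positivity) (ne_of_gt hposb), Real.log_pow]
          push_cast; ring
        have hMr : M * r = 2 * Real.log B + q := div_mul_cancel₀ _ (ne_of_gt hr)
        have hlaB : Real.log (a n) ≤ Real.log B :=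
          Real.log_le_log hposa (haB n hn.le)
        have hmul : M * Real.log (a (n+1)) ≤ M * (Real.log (a n) - r) :=
          mul_le_mul_of_nonneg_left (by linarith) hM0
        simp only [hΦ_def]
        rw [hlb]
        nlinarith [hmul, hMr, hlaB, hM0]
    -- telescoping
    have htel : ∀ n, n ≤ N → Φ n + n * q ≤ Φ 0 := by
      intro n
      induction n with
      | zero => intro _; simp
      | succ n ih =>
        intro hn
        have hn' : n < N := hn
        have := hstepΦ n hn'
        have := ih hn'.le
        push_cast
        linarith
    have hΦN : 0 ≤ Φ N := by
      obtain ⟨h1a, h1b⟩ := hpos' N le_rfl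
      have := Real.log_nonneg h1a
      have := Real.log_nonneg h1b
      simp only [hΦ_def]
      positivity
    have hΦ0 : Φ 0 ≤ (M + 1) * Real.log B := by
      obtain ⟨h1a, h1b⟩ := hpos' 0 (Nat.zero_le N)
      have l1 : Real.log (a 0) ≤ Real.log B :=
        Real.log_le_log (lt_of_lt_of_le one_pos h1a)
          (by show ((s 0).1:ℝ) ≤ (B:ℝ); exact_mod_cast h0a)
      have l2 : Real.log (b 0) ≤ Real.log B :=
        Real.log_le_log (lt_of_lt_of_le one_pos h1b)
          (by show ((s 0).2:ℝ) ≤ (B:ℝ); exact_mod_cast h0b)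
      simp only [hΦ_def]
      nlinarith [mul_le_mul_of_nonneg_left l1 hM0]
    have hNq : (N:ℝ) * q ≤ (M + 1) * Real.log B := by
      have := htel N le_rfl
      linarith
    -- final estimates
    have hlog2 : Real.log 2 ≤ Real.log B :=
      Real.log_le_log two_pos (by exact_mod_cast hB)
    have hlog2' : (0.6931471803:ℝ) < Real.log 2 := Real.log_two_gt_d9
    have hqB : q ≤ Real.log B := by
      have : Real.log (4/3:ℝ) ≤ Real.log 2 := Real.log_le_log (by norm_num) (by norm_num)
      linarith
    have h1B : 1 ≤ 2 * Real.log B := by linarith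
    have hM1 : M + 1 ≤ (3 / r + 2) * Real.log B := by
      have : M ≤ 3 * Real.log B / r := by
        rw [hM_def, div_le_div_iff₀ hr hr]
        nlinarith
      have h2 : (1:ℝ) ≤ 2 * Real.log B := h1B
      have e : (3 / r + 2) * Real.log B = 3 * Real.log B / r + 2 * Real.log B := by ring
      rw [e]; linarith
    have hfin : (N:ℝ) * q ≤ (3 / r + 2) * Real.log B ^ 2 := by
      have := mul_le_mul_of_nonneg_right hM1 hlogB0
      nlinarith [hNq]
    rw [show (3 / r + 2) / q * Real.log B ^ 2 = ((3 / r + 2) * Real.log B ^ 2) / q by ring]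
    rw [le_div_iff₀ hq]
    exact hfin
end

section
/- Let K be a field of characteristic 0, p an odd prime, and suppose Gal(K̄/K) acts on a basis S, T of (Z/pZ)² by σ(S)=S, σ(T)=S+T, τ(S)=S, τ(T)=gT (the Z/pZ-nonsplit case), where g is a primitive root mod p, with image generated by σ, τ. Let M be the fixed field of the kernel of this action and L₂ ⊂ M the fixed field of τ. If ξ ∈ L₂ satisfies N_{L₂/K}(ξ) = a ∈ K×, then b = ∏_{i=1}^{p−1} σⁱ(ξ)^{p−i} ∈ M satisfies: (1) τ(b)/b^g ∈ (M×)^p, (2) N_{M/L₁}(b) ∈ (L₁×)^p where L₁ = K(ζ_p), and (3) σ(b)/(ab) ∈ (M×)^p. -/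
/-- (Z/pZ-nonsplit case.)  `M/K` has Galois automorphisms `σ, τ` with `σ^p = 1`,
`τ^{p−1} = 1`, `τσ^g = στ` (`g` a primitive root mod `p`).  If `ξ` lies in the fixed
field `L₂` of `τ` and `N_{L₂/K}(ξ) = ∏_{i<p} σⁱ(ξ) = a`, then
`b = ∏_{i=1}^{p−1} σⁱ(ξ)^{p−i}` satisfies: (1) `τ(b)/b^g ∈ (M×)^p`;
(2) `N_{M/L₁}(b) ∈ (L₁×)^p` where `L₁` is the fixed field of `σ`;
(3) `σ(b)/(ab) ∈ (M×)^p`. -/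
theorem stmt_16 (p : ℕ) (hp : p.Prime) (hodd : Odd p) (g : ℕ)
    (hg : orderOf (g : ZMod p) = p - 1)
    (K M : Type*) [Field K] [CharZero K] [Field M] [Algebra K M]
    (σ τ : M ≃ₐ[K] M) (hσ : σ ^ p = 1) (hτ : τ ^ (p - 1) = 1)
    (hrel : τ * σ ^ g = σ * τ)
    (ξ : M) (hξ : ξ ≠ 0) (hτξ : τ ξ = ξ)
    (a : K) (hNa : ∏ i ∈ Finset.range p, (σ ^ i) ξ = algebraMap K M a)
    (bb : M) (hbb : bb = ∏ i ∈ Finset.Ico 1 p, ((σ ^ i) ξ) ^ (p - i)) :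
    (∃ w : M, w ≠ 0 ∧ τ bb = bb ^ g * w ^ p) ∧
    (∃ y : M, σ y = y ∧ ∏ i ∈ Finset.range p, (σ ^ i) bb = y ^ p) ∧
    (∃ z : M, z ≠ 0 ∧ σ bb = algebraMap K M a * bb * z ^ p) := by
  haveI := Fact.mk hp
  have hp0 : 0 < p := hp.pos
  have hp1 : 1 < p := hp.one_lt
  set A : M := algebraMap K M a with hA
  set f : ℕ → M := fun i => (σ ^ i) ξ with hf
  have hfz : ∀ i, f i ≠ 0 := by
    intro i h
    apply hξ
    apply (σ ^ i).injective
    rw [map_zero]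
    exact h
  have hg0 : (g : ZMod p) ≠ 0 := by
    intro h
    rw [h, orderOf_eq_zero_iff'.mpr] at hg
    · omega
    · intro n hn
      simp [zero_pow hn.ne']
  have hgpos : 0 < g := by
    rcases Nat.eq_zero_or_pos g with h | h
    · exact absurd (by simp [h]) hg0
    · exact h
  have hfp : ∀ i, f (i + p) = f i := by
    intro i
    simp only [hf, pow_add, hσ, mul_one]
  have hfpm : ∀ m j, f (j + p * m) = f j := by
    intro m
    induction m with
    | zero => simp
    | succ m ih =>
      intro j
      have h' : j + p * (m + 1) = (j + p * m) + p := by ring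
      rw [h', hfp, ih]
  have hfmod : ∀ i, f (i % p) = f i := by
    intro i
    conv_rhs => rw [← Nat.mod_add_div i p]
    rw [hfpm]
  have hσf : ∀ i, σ (f i) = f (i + 1) := by
    intro i
    simp only [hf, pow_succ', AlgEquiv.mul_apply]
  have hσkf : ∀ k i, (σ ^ k) (f i) = f (i + k) := by
    intro k i
    simp only [hf, ← AlgEquiv.mul_apply, ← pow_add, add_comm i k]
  have hAfix : σ A = A := by simp [hA]
  have hAi : ∀ i, ∏ k ∈ Finset.range p, f (k + i) = A := by
    intro i
    induction i with
    | zero => simpa [hf] using hNa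
    | succ i ih =>
      have h1 : ∀ k : ℕ, f (k + (i + 1)) = f ((k + 1) + i) := by
        intro k
        congr 1
        ring
      calc ∏ k ∈ Finset.range p, f (k + (i + 1))
          = ∏ k ∈ Finset.range p, f ((k + 1) + i) :=
            Finset.prod_congr rfl fun k _ => h1 k
        _ = (∏ k ∈ Finset.range (p + 1), f (k + i)) / f (0 + i) := by
            rw [Finset.prod_range_succ', mul_div_cancel_right₀ _ (hfz _)]
        _ = (∏ k ∈ Finset.range p, f (k + i)) * f (p + i) / f (0 + i) := by
            rw [Finset.prod_range_succ]
        _ = A := by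
            have h2 : f (p + i) = f (0 + i) := by
              rw [add_comm p i, ← hfp (0 + i)]
              congr 1
              ring
            rw [ih, h2, mul_div_cancel_right₀ _ (hfz _)]
  have hA0 : A ≠ 0 := by
    rw [← hAi 0]
    exact Finset.prod_ne_zero_iff.mpr fun k _ => hfz _
  have hbbf : bb = ∏ i ∈ Finset.Ico 1 p, f i ^ (p - i) := hbb
  have hbb0 : bb ≠ 0 := by
    rw [hbbf]
    exact Finset.prod_ne_zero_iff.mpr fun k _ => pow_ne_zero _ (hfz _)
  refine ⟨?_, ?_, ?_⟩
  · -- part 1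
    have hcomm : ∀ k : ℕ, τ * σ ^ (g * k) = σ ^ k * τ := by
      intro k
      induction k with
      | zero => simp
      | succ k ih =>
        have h1 : g * (k + 1) = g * k + g := by ring
        rw [h1, pow_add, ← mul_assoc, ih, mul_assoc, hrel, ← mul_assoc, ← pow_succ]
    have hτf : ∀ k : ℕ, τ (f (g * k)) = f k := by
      intro k
      have h1 : τ (f (g * k)) = (τ * σ ^ (g * k)) ξ := rfl
      rw [h1, hcomm, AlgEquiv.mul_apply, hτξ]
    set g' : ℕ := ((g : ZMod p)⁻¹).val with hg'
    have hginv : ((g' : ZMod p)) = (g : ZMod p)⁻¹ := by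
      simp [hg', ZMod.natCast_val, ZMod.cast_id]
    have hg'0 : (g' : ZMod p) ≠ 0 := by
      rw [hginv]
      exact inv_ne_zero hg0
    have natinj : ∀ x y : ℕ, x < p → y < p → ((x : ZMod p) = (y : ZMod p)) → x = y := by
      intro x y hx hy h
      rw [← ZMod.val_cast_of_lt hx, ← ZMod.val_cast_of_lt hy, h]
    have hmem : ∀ c : ℕ, (c : ZMod p) ≠ 0 → c % p ∈ Finset.Ico 1 p := by
      intro c hc
      simp only [Finset.mem_Ico]
      refine ⟨?_, Nat.mod_lt _ hp0⟩
      rcases Nat.eq_zero_or_pos (c % p) with h | h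
      · exact absurd (by rw [← ZMod.natCast_mod c p, h, Nat.cast_zero]) hc
      · exact h
    have hne : ∀ k ∈ Finset.Ico 1 p, ((k : ZMod p)) ≠ 0 := by
      intro k hk h
      simp only [Finset.mem_Ico] at hk
      rw [ZMod.natCast_eq_zero_iff] at h
      have := Nat.le_of_dvd (by omega) h
      omega
    have linv : ∀ k ∈ Finset.Ico 1 p, g * (g' * k % p) % p = k := by
      intro k hk
      simp only [Finset.mem_Ico] at hk
      refine natinj _ _ (Nat.mod_lt _ hp0) hk.2 ?_
      push_cast [ZMod.natCast_mod]
      rw [← mul_assoc, hginv, mul_inv_cancel₀ hg0, one_mul]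
    have rinv : ∀ k ∈ Finset.Ico 1 p, g' * (g * k % p) % p = k := by
      intro k hk
      simp only [Finset.mem_Ico] at hk
      refine natinj _ _ (Nat.mod_lt _ hp0) hk.2 ?_
      push_cast [ZMod.natCast_mod]
      rw [← mul_assoc, hginv, inv_mul_cancel₀ hg0, one_mul]
    have hbij : ∀ F : ℕ → M,
        ∏ i ∈ Finset.Ico 1 p, F i = ∏ k ∈ Finset.Ico 1 p, F (g * k % p) := by
      intro F
      refine Finset.prod_nbij' (fun k => g' * k % p) (fun k => g * k % p)
        ?_ ?_ ?_ ?_ ?_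
      · intro k hk
        exact hmem _ (by push_cast; exact mul_ne_zero hg'0 (hne k hk))
      · intro k hk
        exact hmem _ (by push_cast; exact mul_ne_zero hg0 (hne k hk))
      · intro k hk
        simpa using linv k hk
      · intro k hk
        simpa using rinv k hk
      · intro k hk
        rw [linv k hk]
    have hτbb : τ bb = ∏ k ∈ Finset.Ico 1 p, f k ^ (p - g * k % p) := by
      rw [hbbf, hbij (fun i => f i ^ (p - i)), map_prod]
      refine Finset.prod_congr rfl fun k hk => ?_
      rw [map_pow]
      congr 1
      rw [hfmod (g * k), hτf]
    set W : M := ∏ k ∈ Finset.Ico 1 p, f k ^ (g - 1 - g * k / p) with hW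
    have hW0 : W ≠ 0 :=
      Finset.prod_ne_zero_iff.mpr fun k _ => pow_ne_zero _ (hfz _)
    have hmain : τ bb * W ^ p = bb ^ g := by
      rw [hτbb, hW, ← Finset.prod_pow, ← Finset.prod_mul_distrib, hbbf, ← Finset.prod_pow]
      refine Finset.prod_congr rfl fun k hk => ?_
      simp only [Finset.mem_Ico] at hk
      rw [← pow_mul, ← pow_mul, ← pow_add]
      congr 1
      have h1 : p * (g * k / p) + g * k % p = g * k := Nat.div_add_mod _ _
      have h2 : g * k % p < p := Nat.mod_lt _ hp0
      have h3 : g * k / p < g := by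
        apply Nat.div_lt_of_lt_mul
        rw [mul_comm p g]
        exact mul_lt_mul_of_pos_left hk.2 hgpos
      have e1 : (p - k) * g = p * g - g * k := by
        rw [Nat.sub_mul, mul_comm k g]
      have e2 : (g - 1 - g * k / p) * p = p * g - p - p * (g * k / p) := by
        rw [Nat.sub_mul, Nat.sub_mul, one_mul, mul_comm g p, mul_comm (g * k / p) p]
      have h5 : p * (g * k / p) + p ≤ p * g := by
        have h6 : g * k / p + 1 ≤ g := h3
        calc p * (g * k / p) + p = p * (g * k / p + 1) := by ring
          _ ≤ p * g := Nat.mul_le_mul_left p h6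
      rw [e1, e2]
      generalize hX : p * g = X at h5 ⊢
      generalize hZ : p * (g * k / p) = Z at h1 h5 ⊢
      omega
    refine ⟨W⁻¹, inv_ne_zero hW0, ?_⟩
    rw [inv_pow, ← hmain, mul_assoc, mul_inv_cancel₀ (pow_ne_zero p hW0), mul_one]
  · -- part 2
    obtain ⟨m, hm⟩ : ∃ m, p - 1 = 2 * m := by
      obtain ⟨t, ht⟩ := hodd
      exact ⟨t, by omega⟩
    refine ⟨A ^ m, by rw [map_pow, hAfix], ?_⟩
    have step1 : ∀ k, (σ ^ k) bb = ∏ i ∈ Finset.Ico 1 p, f (i + k) ^ (p - i) := by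
      intro k
      rw [hbbf, map_prod]
      exact Finset.prod_congr rfl fun i _ => by rw [map_pow, hσkf]
    have hsum : ∑ i ∈ Finset.Ico 1 p, (p - i) = m * p := by
      have r1 : ∑ i ∈ Finset.Ico 1 p, (p - i)
          = ∑ j ∈ Finset.range (p - 1), (p - (1 + j)) := by
        rw [Finset.sum_Ico_eq_sum_range]
      have r2 : ∑ j ∈ Finset.range (p - 1), (p - (1 + j))
          = ∑ j ∈ Finset.range (p - 1), (p - 1 - j) :=
        Finset.sum_congr rfl fun j _ => by omega
      have r3 : ∑ j ∈ Finset.range p, (p - 1 - j) = ∑ j ∈ Finset.range p, j :=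
        Finset.sum_range_reflect (fun j => j) p
      have r4 : ∑ j ∈ Finset.range p, (p - 1 - j)
          = ∑ j ∈ Finset.range (p - 1), (p - 1 - j) + (p - 1 - (p - 1)) := by
        rw [show p = (p - 1) + 1 by omega]
        rw [Finset.sum_range_succ]
        congr 1 <;> omega
      have r5 := Finset.sum_range_id_mul_two p
      have r6 : p * (p - 1) = (m * p) * 2 := by
        rw [hm]
        ring
      rw [r6] at r5
      generalize hS : ∑ j ∈ Finset.range p, j = S at r3 r5
      generalize hT : m * p = T at r5 ⊢
      omega
    calc ∏ k ∈ Finset.range p, (σ ^ k) bb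
        = ∏ k ∈ Finset.range p, ∏ i ∈ Finset.Ico 1 p, f (i + k) ^ (p - i) :=
          Finset.prod_congr rfl fun k _ => step1 k
      _ = ∏ i ∈ Finset.Ico 1 p, ∏ k ∈ Finset.range p, f (i + k) ^ (p - i) :=
          Finset.prod_comm
      _ = ∏ i ∈ Finset.Ico 1 p, A ^ (p - i) := by
          refine Finset.prod_congr rfl fun i _ => ?_
          rw [Finset.prod_pow]
          congr 1
          calc ∏ k ∈ Finset.range p, f (i + k)
              = ∏ k ∈ Finset.range p, f (k + i) :=
                Finset.prod_congr rfl fun k _ => by rw [add_comm]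
            _ = A := hAi i
      _ = A ^ (∑ i ∈ Finset.Ico 1 p, (p - i)) := Finset.prod_pow_eq_pow_sum _ _ _
      _ = (A ^ m) ^ p := by rw [hsum, pow_mul]
  · -- part 3
    refine ⟨(f 1)⁻¹, inv_ne_zero (hfz 1), ?_⟩
    have hσbb : σ bb = ∏ i ∈ Finset.Ico 1 p, f (i + 1) ^ (p - i) := by
      rw [hbbf, map_prod]
      exact Finset.prod_congr rfl fun i _ => by rw [map_pow, hσf]
    have key : σ bb * f 1 ^ p = A * bb := by
      have c1 : ∀ i : ℕ, f (i + 1) ^ (p + 1 - (i + 1)) = f (i + 1) ^ (p - i) := by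
        intro i
        congr 1
        omega
      have c2 : ∏ i ∈ Finset.range (p + 1), f i ^ (p + 1 - i)
          = (∏ i ∈ Finset.range p, f (i + 1) ^ (p - i)) * f 0 ^ (p + 1) := by
        rw [Finset.prod_range_succ']
        congr 1
        exact Finset.prod_congr rfl fun i _ => c1 i
      have c3 : ∏ i ∈ Finset.range (p + 1), f i ^ (p + 1 - i)
          = (∏ i ∈ Finset.range p, f i ^ (p + 1 - i)) * f 0 := by
        rw [Finset.prod_range_succ]
        congr 1
        rw [Nat.add_sub_cancel_left, pow_one]
        have : f p = f (0 + p) := by rw [Nat.zero_add]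
        rw [this, hfp]
      have c4 : ∏ i ∈ Finset.range p, f i ^ (p + 1 - i)
          = (∏ i ∈ Finset.range p, f i ^ (p - i)) * A := by
        rw [← hAi 0, ← Finset.prod_mul_distrib]
        refine Finset.prod_congr rfl fun i hi => ?_
        simp only [Finset.mem_range, Nat.add_zero] at hi ⊢
        rw [show p + 1 - i = (p - i) + 1 from by omega, pow_succ]
      have c5 : ∏ i ∈ Finset.range p, f i ^ (p - i) = f 0 ^ p * bb := by
        rw [Finset.range_eq_Ico, Finset.prod_eq_prod_Ico_succ_bot hp0, hbbf]
        simp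
      have c6 : ∏ i ∈ Finset.range p, f (i + 1) ^ (p - i)
          = f 1 ^ p * ∏ i ∈ Finset.Ico 1 p, f (i + 1) ^ (p - i) := by
        rw [Finset.range_eq_Ico, Finset.prod_eq_prod_Ico_succ_bot hp0]
        simp
      have heq : (∏ i ∈ Finset.range p, f (i + 1) ^ (p - i)) * f 0 ^ (p + 1)
          = (f 0 ^ p * bb * A) * f 0 := by
        rw [← c2, c3, c4, c5]
      have hf00 : f 0 ^ (p + 1) ≠ 0 := pow_ne_zero _ (hfz 0)
      have heq2 : ∏ i ∈ Finset.range p, f (i + 1) ^ (p - i) = A * bb := by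
        have h' : (f 0 ^ p * bb * A) * f 0 = (A * bb) * f 0 ^ (p + 1) := by
          rw [pow_succ]
          ring
        rw [h'] at heq
        exact mul_right_cancel₀ hf00 heq
      rw [hσbb,
        mul_comm (∏ i ∈ Finset.Ico 1 p, f (i + 1) ^ (p - i)) (f 1 ^ p), ← c6]
      exact heq2
    rw [inv_pow, ← key, mul_assoc, mul_inv_cancel₀ (pow_ne_zero p (hfz 1)), mul_one]
end
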